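/- arXiv:1210.6615 — 7 statements merged into one kernel-verified Lean document; each statement's English description precedes it below -/
import Mathlib

section
/- If f: V → B satisfies Δ_h^n f(x) = 0 for all x, h ∈ V (where V, B are rational vector spaces and n ∈ ℕ), then Δ_{h_n}⋯Δ_{h_1} f(x) = 0 for all x, h_1, ..., h_n ∈ V. -/
open Polynomial

/-- A polynomial over a ℚ-algebra vanishing at all naturals is zero. -/
theorem my_zero_of_eval_nat {S : Type*} [CommRing S] [Algebra ℚ S]
    (p : S[X]) (h : ∀ t : ℕ, p.eval (t : S) = 0) : p = 0 := by
  suffices H : ∀ d : ℕ, ∀ p : S[X], p.natDegree ≤ d → (∀ t : ℕ, p.eval (t : S) = 0) → p = 0 from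
    H p.natDegree p le_rfl h
  intro d
  induction d with
  | zero =>
    intro p hd h
    have h0 : p.coeff 0 = 0 := by rw [coeff_zero_eq_eval_zero]; simpa using h 0
    have := Polynomial.eq_C_of_natDegree_le_zero hd
    rw [this, h0] at *
    simpa using this
  | succ d ih =>
    intro p hd h
    have h0 : p.coeff 0 = 0 := by rw [coeff_zero_eq_eval_zero]; simpa using h 0
    have hx : p = X * p.divX := by
      conv_lhs => rw [← X_mul_divX_add p, h0]
      simp
    have hdvx : ∀ t : ℕ, (p.divX).eval ((t : S) + 1) = 0 := by
      intro t
      have := h (t + 1)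
      rw [hx] at this
      have hcast : ((t + 1 : ℕ) : S) = (t : S) + 1 := by push_cast; ring
      rw [hcast, eval_mul, eval_X] at this
      have hu : IsUnit ((t : S) + 1) := by
        have heq : ((t : S) + 1) = algebraMap ℚ S ((t : ℚ) + 1) := by push_cast; simp
        rw [heq]
        exact (isUnit_iff_ne_zero.2 (by positivity)).map _
      exact (hu.mul_right_eq_zero).mp this
    set q : S[X] := (p.divX).comp (X + C 1) with hq
    have hqe : ∀ t : ℕ, q.eval (t : S) = 0 := by
      intro t
      rw [hq, eval_comp]
      simpa using hdvx t
    have hdeg : p.divX.natDegree ≤ d := by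
      rw [Polynomial.natDegree_le_iff_coeff_eq_zero]
      intro N hN
      rw [Polynomial.coeff_divX]
      apply Polynomial.coeff_eq_zero_of_natDegree_lt
      omega
    have hqdeg : q.natDegree ≤ d := by
      have hb : (X + C 1 : S[X]).natDegree ≤ 1 :=
        le_trans (natDegree_add_le _ _) (by simp [natDegree_X_le])
      have := Polynomial.natDegree_comp_le (p := p.divX) (q := X + C 1)
      have := Nat.mul_le_mul hdeg hb
      rw [hq]
      omega
    have hq0 : q = 0 := ih q hqdeg hqe
    have hdvx0 : p.divX = 0 := by
      have hcomp : q.comp (X - C 1) = p.divX := by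
        rw [hq, comp_assoc]
        simp
      rw [← hcomp, hq0, zero_comp]
    rw [hx, hdvx0, mul_zero]

theorem my_coeff_zero_pow {S : Type*} [CommRing S] (p : S[X]) (m : ℕ) :
    (p ^ m).coeff 0 = (p.coeff 0) ^ m := by
  simpa only [Polynomial.constantCoeff_apply] using map_pow Polynomial.constantCoeff p m

theorem my_coeff_one_pow {S : Type*} [CommRing S] (p : S[X]) (m : ℕ) :
    (p ^ m).coeff 1 = m • ((p.coeff 0) ^ (m - 1) * p.coeff 1) := by
  induction m with
  | zero => simp [Polynomial.coeff_one]
  | succ m ih =>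
    have hmul : ∀ q r : S[X], (q * r).coeff 1 = q.coeff 0 * r.coeff 1 + q.coeff 1 * r.coeff 0 := by
      intro q r
      rw [Polynomial.coeff_mul, Finset.Nat.sum_antidiagonal_eq_sum_range_succ_mk]
      rw [Finset.sum_range_succ, Finset.sum_range_one]
    rw [pow_succ, hmul, ih, my_coeff_zero_pow]
    cases m with
    | zero => simp
    | succ m =>
      simp only [Nat.add_sub_cancel, succ_nsmul, smul_mul_assoc, nsmul_eq_mul]
      ring

theorem my_keyCoeff {S : Type*} [CommRing S] (p q : S[X]) (k : ℕ) (h0 : p.coeff 0 = 0) :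
    (p ^ k * q).coeff k = (p.coeff 1) ^ k * q.coeff 0 := by
  have hx : p = X * p.divX := by
    conv_lhs => rw [← X_mul_divX_add p, h0]
    simp
  have hrw : p ^ k * q = X ^ k * ((p.divX) ^ k * q) := by
    conv_lhs => rw [hx]
    ring
  have hc := Polynomial.coeff_X_pow_mul ((p.divX) ^ k * q) k 0
  rw [zero_add] at hc
  rw [hrw, hc, Polynomial.mul_coeff_zero, my_coeff_zero_pow, Polynomial.coeff_divX]

noncomputable def bq (k : ℕ) : ℚ[X] := (k.factorial : ℚ)⁻¹ • descPochhammer ℚ k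

theorem bq_eval_nat (k t : ℕ) : (bq k).eval (t : ℚ) = (t.choose k : ℚ) := by
  rw [bq, Polynomial.eval_smul, smul_eq_mul, descPochhammer_eval_eq_descFactorial,
    Nat.descFactorial_eq_factorial_mul_choose]
  push_cast
  rw [← mul_assoc, inv_mul_cancel₀ (by positivity), one_mul]

theorem bq_zero : bq 0 = 1 := by simp [bq, descPochhammer]

theorem bq_coeff_zero (k : ℕ) (hk : k ≠ 0) : (bq k).coeff 0 = 0 := by
  rw [Polynomial.coeff_zero_eq_eval_zero, bq, Polynomial.eval_smul,
    descPochhammer_ne_zero_eval_zero (R := ℚ) hk, smul_zero]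

theorem descPochhammer_coeff_one (k : ℕ) (hk : k ≠ 0) :
    (descPochhammer ℚ k).coeff 1 = (-1) ^ (k + 1) * (k - 1).factorial := by
  induction k with
  | zero => omega
  | succ k ih =>
    rcases Nat.eq_zero_or_pos k with hk0 | hk0
    · subst hk0
      norm_num [descPochhammer]
    · rw [descPochhammer_succ_right]
      have hmul : ∀ q r : ℚ[X], (q * r).coeff 1 = q.coeff 0 * r.coeff 1 + q.coeff 1 * r.coeff 0 := by
        intro q r
        rw [Polynomial.coeff_mul, Finset.Nat.sum_antidiagonal_eq_sum_range_succ_mk]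
        rw [Finset.sum_range_succ, Finset.sum_range_one]
      rw [hmul]
      have h0 : (descPochhammer ℚ k).coeff 0 = 0 := by
        rw [Polynomial.coeff_zero_eq_eval_zero, descPochhammer_ne_zero_eval_zero (R := ℚ) (by omega)]
      rw [h0, ih (by omega)]
      have hc1 : (X - ((k : ℕ) : ℚ[X])).coeff 1 = 1 := by
        simp [Polynomial.coeff_sub, Polynomial.coeff_X_one]
      have hc0 : (X - ((k : ℕ) : ℚ[X])).coeff 0 = -(k : ℚ) := by
        simp [Polynomial.coeff_sub]
      rw [hc1, hc0]
      have : (k : ℚ) - 1 + 1 = k := by ring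
      rcases Nat.exists_eq_add_of_lt hk0 with ⟨k', rfl⟩
      simp only [Nat.add_sub_cancel]
      rw [Nat.factorial_succ]
      push_cast
      ring

theorem bq_coeff_one (k : ℕ) (hk : k ≠ 0) :
    (bq k).coeff 1 = (-1) ^ (k + 1) / k := by
  rw [bq, Polynomial.coeff_smul, descPochhammer_coeff_one k hk, smul_eq_mul]
  rcases Nat.exists_eq_add_of_lt (Nat.pos_of_ne_zero hk) with ⟨k', rfl⟩
  simp only [Nat.add_sub_cancel, zero_add]
  rw [Nat.factorial_succ]
  push_cast
  field_simp

theorem bq_one_coeff_one : (bq 0).coeff 1 = 0 := by rw [bq_zero]; simp [Polynomial.coeff_one]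
section MainAlg

variable {R : Type*} [CommRing R] [Algebra ℚ R]

noncomputable def bR (R : Type*) [CommRing R] [Algebra ℚ R] (k : ℕ) : R[X] :=
  (bq k).map (algebraMap ℚ R)

noncomputable def psi (n : ℕ) (r : R) : R[X] :=
  ∑ k ∈ Finset.range n, bR R k * Polynomial.C (r ^ k)

noncomputable def Lr (n : ℕ) (r : R) : R :=
  ∑ k ∈ Finset.Ico 1 n, (((-1 : ℚ) ^ (k + 1) / k)) • r ^ k

theorem psi_coeff_zero (n : ℕ) (hn : 1 ≤ n) (r : R) : (psi n r).coeff 0 = 1 := by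
  rw [psi, Polynomial.finset_sum_coeff]
  rw [Finset.sum_eq_single 0]
  · simp [bR, bq_zero]
  · intro k _ hk
    rw [Polynomial.coeff_mul_C, bR, Polynomial.coeff_map, bq_coeff_zero k hk]
    simp
  · intro habs
    exact absurd (Finset.mem_range.2 hn) habs

theorem psi_coeff_one (n : ℕ) (r : R) : (psi n r).coeff 1 = Lr n r := by
  rw [psi, Polynomial.finset_sum_coeff, Lr]
  rw [Finset.range_eq_Ico]
  rcases Nat.lt_or_ge 0 n with hn | hn
  · rw [Finset.sum_eq_sum_Ico_succ_bot hn]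
    have h0 : (bR R 0 * Polynomial.C (r ^ 0)).coeff 1 = 0 := by
      rw [Polynomial.coeff_mul_C, bR, Polynomial.coeff_map, bq_one_coeff_one]
      simp
    rw [h0, zero_add]
    apply Finset.sum_congr rfl
    intro k hk
    have hk1 : k ≠ 0 := by
      have := (Finset.mem_Ico.1 hk).1; omega
    rw [Polynomial.coeff_mul_C, bR, Polynomial.coeff_map, bq_coeff_one k hk1,
      Algebra.smul_def]
  · interval_cases n
    simp

theorem pow_expand (n : ℕ) (r : R) (hr : r ^ n = 0) (t : ℕ) :
    (1 + r) ^ t = ∑ k ∈ Finset.range n, (t.choose k : ℚ) • r ^ k := by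
  have h1 : (1 + r) ^ t = ∑ k ∈ Finset.range (t + 1), (t.choose k : ℚ) • r ^ k := by
    rw [add_comm, add_pow]
    apply Finset.sum_congr rfl
    intro k _
    rw [one_pow, mul_one, Algebra.smul_def, map_natCast, mul_comm]
  rw [h1]
  set F : ℕ → R := fun k => (t.choose k : ℚ) • r ^ k with hF
  have hbig : ∀ m : ℕ, ∑ k ∈ Finset.range m, F k = ∑ k ∈ Finset.range (max (t + 1) n), F k → True := fun _ _ => trivial
  have e1 : ∑ k ∈ Finset.range (t + 1), F k = ∑ k ∈ Finset.range (max (t + 1) n), F k := by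
    apply Finset.sum_subset
    · exact Finset.range_subset_range.2 (le_max_left _ _)
    · intro k _ hk
      have : t < k := by
        simp only [Finset.mem_range, not_lt] at hk
        omega
      rw [hF]
      simp only []
      rw [Nat.choose_eq_zero_of_lt this]
      simp
  have e2 : ∑ k ∈ Finset.range n, F k = ∑ k ∈ Finset.range (max (t + 1) n), F k := by
    apply Finset.sum_subset
    · exact Finset.range_subset_range.2 (le_max_right _ _)
    · intro k _ hk
      simp only [Finset.mem_range, not_lt] at hk
      have hrk : r ^ k = 0 := by
        have : r ^ k = r ^ n * r ^ (k - n) := by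
          rw [← pow_add]
          congr 1
          omega
        rw [this, hr, zero_mul]
      rw [hF]
      simp only []
      rw [hrk, smul_zero]
  rw [e1, ← e2]

end MainAlg
section MainAlg2

variable {R : Type*} [CommRing R] [Algebra ℚ R]

theorem psi_eval_nat (n : ℕ) (r : R) (t : ℕ) :
    (psi n r).eval (t : R) = ∑ k ∈ Finset.range n, (t.choose k : ℚ) • r ^ k := by
  rw [psi, Polynomial.eval_finset_sum]
  apply Finset.sum_congr rfl
  intro k _
  rw [Polynomial.eval_mul, Polynomial.eval_C, bR, Polynomial.eval_map,
    Polynomial.eval₂_at_natCast, bq_eval_nat, Algebra.smul_def]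

variable {V : Type*} [AddCommMonoid V]

theorem e_nsmul (e : V → R) (he0 : e 0 = 1) (headd : ∀ v w, e (v + w) = e v * e w)
    (t : ℕ) (v : V) : e (t • v) = (e v) ^ t := by
  induction t with
  | zero => simpa using he0
  | succ t ih => rw [succ_nsmul, headd, ih, pow_succ]

theorem psi_eval_e (n : ℕ) (e : V → R) (he0 : e 0 = 1)
    (headd : ∀ v w, e (v + w) = e v * e w) (hnil : ∀ v, (e v - 1) ^ n = 0)
    (v : V) (t : ℕ) : (psi n (e v - 1)).eval (t : R) = e (t • v) := by
  rw [psi_eval_nat, e_nsmul e he0 headd, ← pow_expand n (e v - 1) (hnil v) t]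
  congr 1
  ring

end MainAlg2
section MainAlg3

variable {R : Type*} [CommRing R] [Algebra ℚ R]

theorem L_factor (n : ℕ) (hn : 1 ≤ n) (r : R) (hr : r ^ n = 0) :
    ∃ u : R, r = Lr n r * u := by
  rcases Nat.lt_or_ge n 2 with hn2 | hn2
  · -- n = 1 : r = r^1 = 0, Lr = 0
    interval_cases n
    refine ⟨0, ?_⟩
    rw [mul_zero, ← pow_one r, hr]
  · -- n ≥ 2
    set z : R := ∑ k ∈ Finset.Ico 2 n, (((-1 : ℚ) ^ (k + 1) / k)) • r ^ (k - 1) with hz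
    have hLr : Lr n r = r * (1 + z) := by
      rw [Lr, Finset.sum_eq_sum_Ico_succ_bot (by omega : 1 < n)]
      have h1 : (((-1 : ℚ) ^ (1 + 1) / (1:ℕ))) • r ^ 1 = r := by norm_num
      rw [h1, mul_add, mul_one, hz, Finset.mul_sum]
      congr 1
      apply Finset.sum_congr rfl
      intro k hk
      have hk2 : 2 ≤ k := (Finset.mem_Ico.1 hk).1
      rw [mul_smul_comm, ← pow_succ']
      congr 2
      omega
    have hznil : z ^ n = 0 := by
      have : z = r * ∑ k ∈ Finset.Ico 2 n, (((-1 : ℚ) ^ (k + 1) / k)) • r ^ (k - 2) := by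
        rw [hz, Finset.mul_sum]
        apply Finset.sum_congr rfl
        intro k hk
        have hk2 : 2 ≤ k := (Finset.mem_Ico.1 hk).1
        rw [mul_smul_comm, ← pow_succ']
        congr 2
        omega
      rw [this, mul_pow, hr, zero_mul]
    set g : R := ∑ i ∈ Finset.range n, (-z) ^ i with hg
    have hunit : (1 + z) * g = 1 := by
      have := geom_sum_mul (-z) n
      rw [neg_pow, hznil, mul_zero, zero_sub] at this
      have h2 : g * (-z - 1) = -1 := this
      have : g * (1 + z) = 1 := by linear_combination -h2
      linear_combination this
    refine ⟨g, ?_⟩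
    rw [hLr, mul_assoc, hunit, mul_one]

end MainAlg3
section MainAlg4

variable {R : Type*} [CommRing R] [Algebra ℚ R]

theorem my_coeff_mul_one {S : Type*} [CommRing S] (q r : S[X]) :
    (q * r).coeff 1 = q.coeff 0 * r.coeff 1 + q.coeff 1 * r.coeff 0 := by
  rw [Polynomial.coeff_mul, Finset.Nat.sum_antidiagonal_eq_sum_range_succ_mk]
  rw [Finset.sum_range_succ, Finset.sum_range_one]

theorem mapC_eval {S : Type*} [CommRing S] (p : S[X]) (a : S) :
    (p.map (Polynomial.C : S →+* S[X])).eval (Polynomial.C a) = Polynomial.C (p.eval a) := by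
  rw [Polynomial.eval_map]
  have := Polynomial.hom_eval₂ p (RingHom.id S) (Polynomial.C : S →+* S[X]) a
  simpa using this.symm

variable {V : Type*} [AddCommMonoid V]

theorem step_lemma (n : ℕ) (hn : 1 ≤ n) (e : V → R) (he0 : e 0 = 1)
    (headd : ∀ v w, e (v + w) = e v * e w) (hnil : ∀ v, (e v - 1) ^ n = 0)
    (m : ℕ) (hm : 1 ≤ m) (P : R) (v w : V)
    (H : ∀ u : V, P * (e u - 1) ^ m = 0) :
    P * Lr n (e w - 1) * Lr n (e v - 1) ^ (m - 1) = 0 := by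
  set ψv : R[X] := psi n (e v - 1) with hψv
  set ψw : R[X] := psi n (e w - 1) with hψw
  set A' : (R[X])[X] := Polynomial.C ψv with hA
  set B' : (R[X])[X] := ψw.map (Polynomial.C : R →+* R[X]) with hB
  set Φ : (R[X])[X] := Polynomial.C (Polynomial.C P) * (A' * B' - 1) ^ m with hΦ
  -- evaluation at naturals
  have EV : ∀ t s : ℕ, ((Φ.eval ((t : ℕ) : (R[X]))).eval ((s : ℕ) : R)) = 0 := by
    intro t s
    have hcast : ((t : ℕ) : (R[X])) = Polynomial.C ((t : ℕ) : R) := by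
      rw [map_natCast (Polynomial.C : R →+* R[X])]
    have hBeval : B'.eval ((t : ℕ) : (R[X])) = Polynomial.C (e (t • w)) := by
      rw [hB, hcast, mapC_eval, hψw, psi_eval_e n e he0 headd hnil]
    have h1 : Φ.eval ((t : ℕ) : (R[X])) =
        Polynomial.C P * (ψv * Polynomial.C (e (t • w)) - 1) ^ m := by
      rw [hΦ, Polynomial.eval_mul, Polynomial.eval_pow, Polynomial.eval_sub,
        Polynomial.eval_mul, Polynomial.eval_one, Polynomial.eval_C, hA,
        Polynomial.eval_C, hBeval]
    rw [h1, Polynomial.eval_mul, Polynomial.eval_pow, Polynomial.eval_sub,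
      Polynomial.eval_mul, Polynomial.eval_one, Polynomial.eval_C, Polynomial.eval_C,
      hψv, psi_eval_e n e he0 headd hnil, ← headd]
    exact H (s • v + t • w)
  -- Φ = 0
  have hΦ0 : Φ = 0 := by
    apply my_zero_of_eval_nat
    intro t
    apply my_zero_of_eval_nat
    intro s
    exact EV t s
  -- coefficient extraction
  have hΨ0 : (A' * B' - 1).coeff 0 = ψv - 1 := by
    rw [Polynomial.coeff_sub, Polynomial.mul_coeff_zero, hA, hB]
    rw [Polynomial.coeff_C_zero, Polynomial.coeff_map, psi_coeff_zero n hn]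
    simp
  have hΨ1 : (A' * B' - 1).coeff 1 = ψv * Polynomial.C (Lr n (e w - 1)) := by
    rw [Polynomial.coeff_sub, my_coeff_mul_one, hA, hB]
    rw [Polynomial.coeff_C_zero, Polynomial.coeff_map, Polynomial.coeff_map,
      psi_coeff_one, psi_coeff_zero n hn]
    simp [Polynomial.coeff_one, Polynomial.coeff_C]
  have hc1 : (0 : R[X]) = Polynomial.C P *
      (m • ((ψv - 1) ^ (m - 1) * (ψv * Polynomial.C (Lr n (e w - 1))))) := by
    have := congrArg (fun q => Polynomial.coeff q 1) hΦ0
    simp only [Polynomial.coeff_zero] at this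
    rw [hΦ, Polynomial.coeff_C_mul, my_coeff_one_pow, hΨ0, hΨ1] at this
    exact this.symm
  have hψv0 : (ψv - 1).coeff 0 = 0 := by
    rw [Polynomial.coeff_sub, hψv, psi_coeff_zero n hn]
    simp [Polynomial.coeff_one]
  have hψv1 : (ψv - 1).coeff 1 = Lr n (e v - 1) := by
    rw [Polynomial.coeff_sub, hψv, psi_coeff_one]
    simp [Polynomial.coeff_one]
  have hc2 : (0 : R) = P * (m • ((Lr n (e v - 1)) ^ (m - 1) * (Lr n (e w - 1)))) := by
    have := congrArg (fun q => Polynomial.coeff q (m - 1)) hc1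
    simp only [Polynomial.coeff_zero] at this
    rw [Polynomial.coeff_C_mul, Polynomial.coeff_smul,
      my_keyCoeff _ _ _ hψv0, hψv1] at this
    rw [Polynomial.coeff_mul_C, hψv, psi_coeff_zero n hn, one_mul] at this
    exact this
  -- divide by m
  have hm0 : (m : ℚ) ≠ 0 := by positivity
  have hfin : P * ((Lr n (e v - 1)) ^ (m - 1) * (Lr n (e w - 1))) = 0 := by
    have h3 : (m : ℚ) • (P * ((Lr n (e v - 1)) ^ (m - 1) * (Lr n (e w - 1)))) = 0 := by
      rw [Nat.cast_smul_eq_nsmul]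
      rw [mul_smul_comm] at hc2
      exact hc2.symm
    have := congrArg (fun x => ((m : ℚ)⁻¹) • x) h3
    simpa [smul_smul, inv_mul_cancel₀ hm0] using this
  linear_combination hfin

end MainAlg4
section MainAlg5

variable {R : Type*} [CommRing R] [Algebra ℚ R] {V : Type*} [AddCommMonoid V]

theorem main_alg (n : ℕ) (e : V → R) (he0 : e 0 = 1)
    (headd : ∀ v w, e (v + w) = e v * e w) (hnil : ∀ v, (e v - 1) ^ n = 0)
    (h : Fin n → V) : ∏ i, (e (h i) - 1) = 0 := by
  rcases Nat.eq_zero_or_pos n with hn0 | hn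
  · subst hn0
    have h1 : (1 : R) = 0 := by simpa using hnil 0
    calc (∏ i : Fin 0, (e (h i) - 1)) = 1 := by simp
    _ = 0 := h1
  -- the key induction
  have St : ∀ j : ℕ, j ≤ n → ∀ g : Fin j → V, ∀ v : V,
      (∏ i, Lr n (e (g i) - 1)) * (e v - 1) ^ (n - j) = 0 := by
    intro j
    induction j with
    | zero =>
      intro _ g v
      simpa using hnil v
    | succ j ih =>
      intro hj g v
      rw [Fin.prod_univ_castSucc]
      set P : R := ∏ i : Fin j, Lr n (e (g i.castSucc) - 1) with hP
      set w : V := g (Fin.last j) with hw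
      have H : ∀ u : V, P * (e u - 1) ^ (n - j) = 0 := by
        intro u
        exact ih (by omega) (fun i => g i.castSucc) u
      have hstep := step_lemma n hn e he0 headd hnil (n - j) (by omega) P v w H
      obtain ⟨u, hu⟩ := L_factor n hn (e v - 1) (hnil v)
      have hpow : (e v - 1) ^ (n - (j + 1)) =
          Lr n (e v - 1) ^ (n - j - 1) * u ^ (n - j - 1) := by
        rw [← mul_pow, ← hu, Nat.sub_sub]
      rw [hpow]
      calc P * Lr n (e w - 1) * (Lr n (e v - 1) ^ (n - j - 1) * u ^ (n - j - 1))
          = (P * Lr n (e w - 1) * Lr n (e v - 1) ^ (n - j - 1)) * u ^ (n - j - 1) := by ring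
        _ = 0 * u ^ (n - j - 1) := by rw [hstep]
        _ = 0 := zero_mul _
  have hLprod : (∏ i, Lr n (e (h i) - 1)) = 0 := by
    have := St n le_rfl h 0
    simpa using this
  have hfac : ∀ i : Fin n, ∃ u : R, e (h i) - 1 = Lr n (e (h i) - 1) * u :=
    fun i => L_factor n hn (e (h i) - 1) (hnil (h i))
  choose u hu using hfac
  calc (∏ i, (e (h i) - 1)) = ∏ i, (Lr n (e (h i) - 1) * u i) := by
        apply Finset.prod_congr rfl
        intro i _
        exact hu i
    _ = (∏ i, Lr n (e (h i) - 1)) * ∏ i, u i := Finset.prod_mul_distrib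
    _ = 0 := by rw [hLprod, zero_mul]

end MainAlg5
/-- The difference operator `Δ_h f (x) = f (x + h) - f x`. -/
def fdiff {V B : Type*} [Add V] [Sub B] (h : V) (f : V → B) : V → B :=
  fun x => f (x + h) - f x

theorem stmt_0 {V B : Type*} [AddCommGroup V] [Module ℚ V] [AddCommGroup B] [Module ℚ B]
    (n : ℕ) (f : V → B)
    (hf : ∀ x h : V, (fdiff h)^[n] f x = 0) :
    ∀ (h : Fin n → V) (x : V), ((List.ofFn h).foldr fdiff f) x = 0 := by
  classical
  intro h x
  -- the shift representation of `Multiplicative V` on `V → B`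
  let ρ : Representation ℚ (Multiplicative V) (V → B) :=
  { toFun := fun v =>
      { toFun := fun g => fun y => g (y + v.toAdd)
        map_add' := fun g1 g2 => rfl
        map_smul' := fun c g => rfl }
    map_one' := by
      ext g y
      show g (y + 0) = g y
      rw [add_zero]
    map_mul' := by
      intro v w
      ext g y
      show g (y + (v.toAdd + w.toAdd)) = g (y + v.toAdd + w.toAdd)
      rw [add_assoc] }
  let A := MonoidAlgebra ℚ (Multiplicative V)
  let φ := Representation.asAlgebraHom ρ
  let xe : V → A := fun v => MonoidAlgebra.of ℚ (Multiplicative V) (Multiplicative.ofAdd v)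
  have hfd : ∀ (v : V) (g : V → B), φ (xe v - 1) g = fdiff v g := by
    intro v g
    rw [map_sub, map_one]
    show (φ (xe v)) g - g = fdiff v g
    rw [Representation.asAlgebraHom_of]
    rfl
  have hfdc : ∀ v : V, ⇑(φ (xe v - 1)) = fdiff v := fun v => funext (hfd v)
  -- the annihilator ideal of f
  let I : Ideal A :=
  { carrier := {a | φ a f = 0}
    add_mem' := by
      intro a b ha hb
      show φ (a + b) f = 0
      rw [map_add, LinearMap.add_apply, ha, hb, add_zero]
    zero_mem' := by
      show φ 0 f = 0
      rw [map_zero]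
      rfl
    smul_mem' := by
      intro c a ha
      show φ (c * a) f = 0
      rw [map_mul, Module.End.mul_apply, ha, map_zero] }
  have hmemI : ∀ a : A, a ∈ I ↔ φ a f = 0 := fun a => Iff.rfl
  have hI : ∀ v : V, (xe v - 1) ^ n ∈ I := by
    intro v
    rw [hmemI, map_pow]
    rw [show ((φ (xe v - 1)) ^ n) f = (⇑(φ (xe v - 1)))^[n] f from Module.End.pow_apply _ n f]
    rw [hfdc v]
    funext y
    exact hf y v
  -- pass to the quotient ring
  let R := A ⧸ I
  let e : V → R := fun v => Ideal.Quotient.mk I (xe v)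
  have he0 : e 0 = 1 := by
    show Ideal.Quotient.mk I (xe 0) = 1
    have : xe 0 = 1 := by
      show MonoidAlgebra.of ℚ (Multiplicative V) (Multiplicative.ofAdd (0:V)) = 1
      rw [show Multiplicative.ofAdd (0:V) = 1 from rfl, map_one]
    rw [this, map_one]
  have headd : ∀ v w : V, e (v + w) = e v * e w := by
    intro v w
    show Ideal.Quotient.mk I (xe (v + w)) = _
    have : xe (v + w) = xe v * xe w := by
      show MonoidAlgebra.of ℚ (Multiplicative V) (Multiplicative.ofAdd (v + w)) = _
      rw [show Multiplicative.ofAdd (v + w) = Multiplicative.ofAdd v * Multiplicative.ofAdd w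
        from rfl, map_mul]
    rw [this, map_mul]
  have hnil : ∀ v : V, (e v - 1) ^ n = 0 := by
    intro v
    show ((Ideal.Quotient.mk I (xe v)) - 1) ^ n = 0
    rw [← map_one (Ideal.Quotient.mk I), ← map_sub, ← map_pow,
      Ideal.Quotient.eq_zero_iff_mem]
    exact hI v
  have hmain := main_alg n e he0 headd hnil h
  -- translate back
  have hprod : (∏ i, (xe (h i) - 1)) ∈ I := by
    rw [← Ideal.Quotient.eq_zero_iff_mem, map_prod]
    have : ∀ i : Fin n, Ideal.Quotient.mk I (xe (h i) - 1) = e (h i) - 1 := by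
      intro i
      rw [map_sub, map_one]
    rw [Finset.prod_congr rfl (fun i _ => this i)]
    exact hmain
  have hfoldr : ∀ (l : List V) (g : V → B),
      l.foldr fdiff g = φ ((l.map (fun v => xe v - 1)).prod) g := by
    intro l
    induction l with
    | nil =>
      intro g
      show g = φ 1 g
      rw [map_one]
      rfl
    | cons a l ih =>
      intro g
      show fdiff a (l.foldr fdiff g) = _
      rw [ih g, ← hfd a, List.map_cons, List.prod_cons, map_mul, Module.End.mul_apply]
  have hgoal : (List.ofFn h).foldr fdiff f = φ (∏ i, (xe (h i) - 1)) f := by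
    rw [hfoldr (List.ofFn h) f, List.map_ofFn, List.prod_ofFn]
    rfl
  rw [hgoal, (hmemI _).mp hprod]
  rfl
end

section
/- Let V, B be vector spaces over ℚ and let f: V → B satisfy f(0) = 0 and c_1 f(ax+by) + c_2 f(ax-by) = c_3 f(x) + c_4 f(y) + c_5 f(x+y) + c_6 f(x-y) for all x, y ∈ V, where a, b, c_1, c_3 ∈ ℚ are nonzero, c_1 + c_2 ≠ 0, and |(c_3+c_5+c_6)/(c_1+c_2)| ∉ {0, 1}. If f ≠ 0, then there exists a unique k ∈ {1, 2, 3, 4} with |a|^k = |(c_3+c_5+c_6)/(c_1+c_2)| and a symmetric k-additive function A: V^k → B such that f(x) = A(x, ..., x) for all x ∈ V. -/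
set_option linter.unusedSectionVars false
set_option linter.unnecessarySeqFocus false
set_option maxHeartbeats 1000000

/-- `a : V^k → B` is `k`-additive: additive in each variable. -/
def MultiAdditive {k : ℕ} {V B : Type*} [Add V] [Add B] (a : (Fin k → V) → B) : Prop :=
  ∀ (i : Fin k) (v : Fin k → V) (x y : V),
    a (Function.update v i (x + y)) = a (Function.update v i x) + a (Function.update v i y)

/-- `a : V^k → B` is symmetric: invariant under permutations of the arguments. -/
def SymmetricFn {k : ℕ} {V B : Type*} (a : (Fin k → V) → B) : Prop :=
  ∀ (σ : Equiv.Perm (Fin k)) (v : Fin k → V), a (v ∘ σ) = a v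

namespace Stmt7Aux
variable {V B : Type*} [AddCommGroup V] [Module ℚ V] [AddCommGroup B] [Module ℚ B]

def D (y : V) (m : V → B) : V → B := fun x => m (x + y) - m x

lemma D_comm (y z : V) (m : V → B) : D y (D z m) = D z (D y m) := by
  funext x; simp only [D]; rw [add_right_comm]; abel

lemma D_fun_add (y : V) (m m' : V → B) : D y (m + m') = D y m + D y m' := by
  funext x; simp only [D, Pi.add_apply]; abel

lemma D_fun_sub (y : V) (m m' : V → B) : D y (m - m') = D y m - D y m' := by
  funext x; simp only [D, Pi.sub_apply]; abel

lemma D_fun_smul (y : V) (c : ℚ) (m : V → B) : D y (c • m) = c • D y m := by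
  funext x; simp only [D, Pi.smul_apply, smul_sub]

lemma D_fun_zero (y : V) : D y (0 : V → B) = 0 := by
  funext x; simp [D]

lemma D_add_incr (y z : V) (m : V → B) : D (y + z) m = D y m + D z m + D y (D z m) := by
  funext x; simp only [D, Pi.add_apply]; rw [← add_assoc]; abel

/-- Iterated differences along a list. -/
def DL (l : List V) (m : V → B) : V → B := l.foldr D m

@[simp] lemma DL_nil (m : V → B) : DL ([] : List V) m = m := rfl

@[simp] lemma DL_cons (y : V) (l : List V) (m : V → B) : DL (y :: l) m = D y (DL l m) := rfl

lemma DL_D (l : List V) (w : V) (m : V → B) : DL l (D w m) = D w (DL l m) := by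
  induction l with
  | nil => rfl
  | cons y l ih => simp only [DL_cons, ih, D_comm]

lemma DL_smul (l : List V) (c : ℚ) (m : V → B) : DL l (c • m) = c • DL l m := by
  induction l with
  | nil => rfl
  | cons y l ih => simp only [DL_cons, ih, D_fun_smul]

lemma smul_cancel {M : Type*} [AddCommGroup M] [Module ℚ M] {c : ℚ} (hc : c ≠ 0) {x : M} (h : c • x = 0) : x = 0 := by
  have := congrArg (fun z => c⁻¹ • z) h
  simpa [smul_smul, inv_mul_cancel₀ hc] using this

/-- Székelyhidi-type lemma: a function system summing to zero along lines has
each member a generalized polynomial. -/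
lemma szek : ∀ (n : ℕ) (S : Finset ℚ) (g : ℚ → V → B), S.card ≤ n + 1 →
    (∀ x y : V, ∑ γ ∈ S, g γ (x + γ • y) = 0) →
    ∀ γ ∈ S, ∀ l : List V, l.length = n → DL l (g γ) = 0 := by
  intro n
  induction n with
  | zero =>
    intro S g hcard hE γ hγ l hl
    rw [List.length_eq_zero_iff] at hl
    subst hl
    have hS : S = {γ} := by
      apply Finset.eq_singleton_iff_unique_mem.2
      exact ⟨hγ, fun x hx => Finset.card_le_one.1 hcard x hx γ hγ⟩
    funext u
    have := hE u 0
    rw [hS, Finset.sum_singleton] at this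
    simpa using this
  | succ n ih =>
    intro S g hcard hE γ₀ hγ₀ l hl
    match l, hl with
    | w :: l₂, hl =>
    have hl₂ : l₂.length = n := by simpa using hl
    rcases le_or_gt S.card (n + 1) with hle | hgt
    · have := ih S g hle hE γ₀ hγ₀ l₂ hl₂
      simp [DL_cons, this, D_fun_zero]
    · -- pick another element γₙ ≠ γ₀
      have h1 : 1 < S.card := by omega
      obtain ⟨γₙ, hγₙS, hne⟩ := Finset.exists_mem_ne h1 γ₀
      set z : V := (γ₀ - γₙ)⁻¹ • w with hz
      set g' : ℚ → V → B := fun γ => D ((γ - γₙ) • z) (g γ) with hg'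
      have hE' : ∀ x y : V, ∑ γ ∈ S.erase γₙ, g' γ (x + γ • y) = 0 := by
        intro x y
        have key : ∀ γ : ℚ, (x - γₙ • z) + γ • (y + z) = (x + γ • y) + (γ - γₙ) • z := by
          intro γ
          rw [smul_add, sub_smul]
          abel
        have hsplit : ∀ γ : ℚ, g' γ (x + γ • y)
            = g γ ((x - γₙ • z) + γ • (y + z)) - g γ (x + γ • y) := by
          intro γ
          rw [key γ]
          rfl
        rw [Finset.sum_congr rfl (fun γ _ => hsplit γ), Finset.sum_sub_distrib]
        have hA := Finset.add_sum_erase S (fun γ => g γ ((x - γₙ • z) + γ • (y + z))) hγₙS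
        rw [hE (x - γₙ • z) (y + z)] at hA
        have hB := Finset.add_sum_erase S (fun γ => g γ (x + γ • y)) hγₙS
        rw [hE x y] at hB
        have hterm : g γₙ ((x - γₙ • z) + γₙ • (y + z)) = g γₙ (x + γₙ • y) := by
          rw [key γₙ]
          simp
        have h₁ := eq_neg_of_add_eq_zero_right hA
        have h₂ := eq_neg_of_add_eq_zero_right hB
        beta_reduce at h₁ h₂
        rw [h₁, h₂, hterm]
        abel
      have hcard' : (S.erase γₙ).card ≤ n + 1 := by
        rw [Finset.card_erase_of_mem hγₙS]
        omega
      have hγ₀' : γ₀ ∈ S.erase γₙ := Finset.mem_erase.2 ⟨Ne.symm hne, hγ₀⟩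
      have hres := ih (S.erase γₙ) g' hcard' hE' γ₀ hγ₀' l₂ hl₂
      simp only [hg'] at hres
      have hw : (γ₀ - γₙ) • z = w := by
        rw [hz, smul_smul, mul_inv_cancel₀ (sub_ne_zero.2 (Ne.symm hne)), one_smul]
      rw [DL_cons, ← DL_D, ← hw]
      exact hres


lemma poly4 (φ : V → V → V → V → B)
    (h1 : ∀ u v b c d, φ (u + v) b c d = φ u b c d + φ v b c d)
    (h2 : ∀ a u v c d, φ a (u + v) c d = φ a u c d + φ a v c d)
    (h3 : ∀ a b u v d, φ a b (u + v) d = φ a b u d + φ a b v d)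
    (h4 : ∀ a b c u v, φ a b c (u + v) = φ a b c u + φ a b c v) :
    ∀ x y1 y2 y3 y4 : V, D y1 (D y2 (D y3 (D y4 (fun u => φ u u u u)))) x =
      φ y1 y2 y3 y4 + φ y1 y2 y4 y3 + φ y1 y3 y2 y4 + φ y1 y3 y4 y2 + φ y1 y4 y2 y3 + φ y1 y4 y3 y2 +
      φ y2 y1 y3 y4 + φ y2 y1 y4 y3 + φ y2 y3 y1 y4 + φ y2 y3 y4 y1 + φ y2 y4 y1 y3 + φ y2 y4 y3 y1 +
      φ y3 y1 y2 y4 + φ y3 y1 y4 y2 + φ y3 y2 y1 y4 + φ y3 y2 y4 y1 + φ y3 y4 y1 y2 + φ y3 y4 y2 y1 +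
      φ y4 y1 y2 y3 + φ y4 y1 y3 y2 + φ y4 y2 y1 y3 + φ y4 y2 y3 y1 + φ y4 y3 y1 y2 + φ y4 y3 y2 y1 := by
  intro x y1 y2 y3 y4
  simp only [D, h1, h2, h3, h4]
  abel

lemma level4 (m : V → B)
    (h5 : ∀ a b c d e : V, D a (D b (D c (D d (D e m)))) = (0 : V → B)) :
    ∃ T : V → V → V → V → B,
      (∀ u v b c d, T (u + v) b c d = T u b c d + T v b c d) ∧
      (∀ a u v c d, T a (u + v) c d = T a u c d + T a v c d) ∧
      (∀ a b u v d, T a b (u + v) d = T a b u d + T a b v d) ∧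
      (∀ a b c u v, T a b c (u + v) = T a b c u + T a b c v) ∧
      (∀ a b c d, T b a c d = T a b c d) ∧
      (∀ a b c d, T a c b d = T a b c d) ∧
      (∀ a b c d, T a b d c = T a b c d) ∧
      (∀ a b c d x, D a (D b (D c (D d m))) x = T a b c d) ∧
      (∀ a b c d x, D a (D b (D c (D d (fun u => (24:ℚ)⁻¹ • T u u u u)))) x = T a b c d) := by
  set T : V → V → V → V → B := fun a b c d => D a (D b (D c (D d m))) 0 with hT
  have add1 : ∀ u v b c d, T (u + v) b c d = T u b c d + T v b c d := by
    intro u v b c d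
    show D (u+v) (D b (D c (D d m))) 0 = _
    rw [D_add_incr]
    simp only [Pi.add_apply]
    rw [congrFun (h5 u v b c d) 0]
    simp [hT]
  have add2 : ∀ a u v c d, T a (u + v) c d = T a u c d + T a v c d := by
    intro a u v c d
    show D a (D (u+v) (D c (D d m))) 0 = _
    rw [D_add_incr u v (D c (D d m)), D_fun_add, D_fun_add]
    simp only [Pi.add_apply]
    rw [congrFun (h5 a u v c d) 0]
    simp [hT]
  have add3 : ∀ a b u v d, T a b (u + v) d = T a b u d + T a b v d := by
    intro a b u v d
    show D a (D b (D (u+v) (D d m))) 0 = _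
    rw [D_add_incr u v (D d m), D_fun_add, D_fun_add, D_fun_add, D_fun_add]
    simp only [Pi.add_apply]
    rw [congrFun (h5 a b u v d) 0]
    simp [hT]
  have add4 : ∀ a b c u v, T a b c (u + v) = T a b c u + T a b c v := by
    intro a b c u v
    show D a (D b (D c (D (u+v) m))) 0 = _
    rw [D_add_incr u v m,
      D_fun_add, D_fun_add, D_fun_add, D_fun_add, D_fun_add, D_fun_add]
    simp only [Pi.add_apply]
    rw [congrFun (h5 a b c u v) 0]
    simp [hT]
  have s12 : ∀ a b c d, T b a c d = T a b c d := by
    intro a b c d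
    exact congrFun (D_comm b a (D c (D d m))) 0
  have s23 : ∀ a b c d, T a c b d = T a b c d := by
    intro a b c d
    exact congrFun (congrArg (D a) (D_comm c b (D d m))) 0
  have s34 : ∀ a b c d, T a b d c = T a b c d := by
    intro a b c d
    exact congrFun (congrArg (D a) (congrArg (D b) (D_comm d c m))) 0
  have const : ∀ a b c d x, D a (D b (D c (D d m))) x = T a b c d := by
    intro a b c d x
    show _ = D a (D b (D c (D d m))) 0
    have h : D a (D b (D c (D d m))) (0 + x) - D a (D b (D c (D d m))) 0 = 0 :=
      congrFun (h5 x a b c d) 0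
    rw [zero_add] at h
    exact sub_eq_zero.1 h
  have ident : ∀ a b c d x : V, D a (D b (D c (D d (fun u => (24:ℚ)⁻¹ • T u u u u)))) x = T a b c d := by
    intro a b c d x
    have hfun : (fun u => (24:ℚ)⁻¹ • T u u u u) = (24:ℚ)⁻¹ • (fun u => T u u u u) := rfl
    rw [hfun, D_fun_smul, D_fun_smul, D_fun_smul, D_fun_smul, Pi.smul_apply,
      poly4 T add1 add2 add3 add4 x a b c d]
    have e1243 : T a b d c = T a b c d := by rw [s34]
    have e1324 : T a c b d = T a b c d := by rw [s23]
    have e1342 : T a c d b = T a b c d := by rw [s34, s23]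
    have e1423 : T a d b c = T a b c d := by rw [s23, s34]
    have e1432 : T a d c b = T a b c d := by rw [s23, s34, s23]
    have e2134 : T b a c d = T a b c d := by rw [s12]
    have e2143 : T b a d c = T a b c d := by rw [s12, s34]
    have e2314 : T b c a d = T a b c d := by rw [s23, s12]
    have e2341 : T b c d a = T a b c d := by rw [s34, s23, s12]
    have e2413 : T b d a c = T a b c d := by rw [s23, s12, s34]
    have e2431 : T b d c a = T a b c d := by rw [s23, s34, s23, s12]
    have e3124 : T c a b d = T a b c d := by rw [s12, s23]
    have e3142 : T c a d b = T a b c d := by rw [s12, s34, s23]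
    have e3214 : T c b a d = T a b c d := by rw [s12, s23, s12]
    have e3241 : T c b d a = T a b c d := by rw [s12, s34, s23, s12]
    have e3412 : T c d a b = T a b c d := by rw [s23, s12, s34, s23]
    have e3421 : T c d b a = T a b c d := by rw [s23, s12, s34, s23, s12]
    have e4123 : T d a b c = T a b c d := by rw [s12, s23, s34]
    have e4132 : T d a c b = T a b c d := by rw [s12, s23, s34, s23]
    have e4213 : T d b a c = T a b c d := by rw [s12, s23, s12, s34]
    have e4231 : T d b c a = T a b c d := by rw [s12, s23, s34, s23, s12]
    have e4312 : T d c a b = T a b c d := by rw [s12, s23, s12, s34, s23]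
    have e4321 : T d c b a = T a b c d := by rw [s12, s23, s12, s34, s23, s12]
    rw [e1243, e1324, e1342, e1423, e1432, e2134, e2143, e2314, e2341, e2413, e2431, e3124, e3142, e3214, e3241, e3412, e3421, e4123, e4132, e4213, e4231, e4312, e4321]
    module
  exact ⟨T, add1, add2, add3, add4, s12, s23, s34, const, ident⟩

lemma poly3 (φ : V → V → V → B)
    (h1 : ∀ u v b c, φ (u + v) b c = φ u b c + φ v b c)
    (h2 : ∀ a u v c, φ a (u + v) c = φ a u c + φ a v c)
    (h3 : ∀ a b u v, φ a b (u + v) = φ a b u + φ a b v) :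
    ∀ x y1 y2 y3 : V, D y1 (D y2 (D y3 (fun u => φ u u u))) x =
      φ y1 y2 y3 + φ y1 y3 y2 + φ y2 y1 y3 + φ y2 y3 y1 + φ y3 y1 y2 + φ y3 y2 y1 := by
  intro x y1 y2 y3
  simp only [D, h1, h2, h3]
  abel

lemma poly2 (φ : V → V → B)
    (h1 : ∀ u v b, φ (u + v) b = φ u b + φ v b)
    (h2 : ∀ a u v, φ a (u + v) = φ a u + φ a v) :
    ∀ x y1 y2 : V, D y1 (D y2 (fun u => φ u u)) x = φ y1 y2 + φ y2 y1 := by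
  intro x y1 y2
  simp only [D, h1, h2]
  abel

lemma level3 (m : V → B)
    (h4 : ∀ a b c d : V, D a (D b (D c (D d m))) = (0 : V → B)) :
    ∃ T : V → V → V → B,
      (∀ u v b c, T (u + v) b c = T u b c + T v b c) ∧
      (∀ a u v c, T a (u + v) c = T a u c + T a v c) ∧
      (∀ a b u v, T a b (u + v) = T a b u + T a b v) ∧
      (∀ a b c, T b a c = T a b c) ∧
      (∀ a b c, T a c b = T a b c) ∧
      (∀ a b c x, D a (D b (D c m)) x = T a b c) ∧
      (∀ a b c x, D a (D b (D c (fun u => (6:ℚ)⁻¹ • T u u u))) x = T a b c) := by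
  set T : V → V → V → B := fun a b c => D a (D b (D c m)) 0 with hT
  have add1 : ∀ u v b c, T (u + v) b c = T u b c + T v b c := by
    intro u v b c
    show D (u+v) (D b (D c m)) 0 = _
    rw [D_add_incr]
    simp only [Pi.add_apply]
    rw [congrFun (h4 u v b c) 0]
    simp [hT]
  have add2 : ∀ a u v c, T a (u + v) c = T a u c + T a v c := by
    intro a u v c
    show D a (D (u+v) (D c m)) 0 = _
    rw [D_add_incr u v (D c m), D_fun_add, D_fun_add]
    simp only [Pi.add_apply]
    rw [congrFun (h4 a u v c) 0]
    simp [hT]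
  have add3 : ∀ a b u v, T a b (u + v) = T a b u + T a b v := by
    intro a b u v
    show D a (D b (D (u+v) m)) 0 = _
    rw [D_add_incr u v m, D_fun_add, D_fun_add, D_fun_add, D_fun_add]
    simp only [Pi.add_apply]
    rw [congrFun (h4 a b u v) 0]
    simp [hT]
  have s12 : ∀ a b c, T b a c = T a b c := by
    intro a b c
    exact congrFun (D_comm b a (D c m)) 0
  have s23 : ∀ a b c, T a c b = T a b c := by
    intro a b c
    exact congrFun (congrArg (D a) (D_comm c b m)) 0
  have const : ∀ a b c x, D a (D b (D c m)) x = T a b c := by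
    intro a b c x
    show _ = D a (D b (D c m)) 0
    have h : D a (D b (D c m)) (0 + x) - D a (D b (D c m)) 0 = 0 :=
      congrFun (h4 x a b c) 0
    rw [zero_add] at h
    exact sub_eq_zero.1 h
  have ident : ∀ a b c x : V, D a (D b (D c (fun u => (6:ℚ)⁻¹ • T u u u))) x = T a b c := by
    intro a b c x
    have hfun : (fun u => (6:ℚ)⁻¹ • T u u u) = (6:ℚ)⁻¹ • (fun u => T u u u) := rfl
    rw [hfun, D_fun_smul, D_fun_smul, D_fun_smul, Pi.smul_apply,
      poly3 T add1 add2 add3 x a b c]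
    have e132 : T a c b = T a b c := by rw [s23]
    have e213 : T b a c = T a b c := by rw [s12]
    have e231 : T b c a = T a b c := by rw [s23, s12]
    have e312 : T c a b = T a b c := by rw [s12, s23]
    have e321 : T c b a = T a b c := by rw [s12, s23, s12]
    rw [e132, e213, e231, e312, e321]
    module
  exact ⟨T, add1, add2, add3, s12, s23, const, ident⟩

lemma level2 (m : V → B)
    (h3 : ∀ a b c : V, D a (D b (D c m)) = (0 : V → B)) :
    ∃ T : V → V → B,
      (∀ u v b, T (u + v) b = T u b + T v b) ∧
      (∀ a u v, T a (u + v) = T a u + T a v) ∧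
      (∀ a b, T b a = T a b) ∧
      (∀ a b x, D a (D b m) x = T a b) ∧
      (∀ a b x, D a (D b (fun u => (2:ℚ)⁻¹ • T u u)) x = T a b) := by
  set T : V → V → B := fun a b => D a (D b m) 0 with hT
  have add1 : ∀ u v b, T (u + v) b = T u b + T v b := by
    intro u v b
    show D (u+v) (D b m) 0 = _
    rw [D_add_incr]
    simp only [Pi.add_apply]
    rw [congrFun (h3 u v b) 0]
    simp [hT]
  have add2 : ∀ a u v, T a (u + v) = T a u + T a v := by
    intro a u v
    show D a (D (u+v) m) 0 = _
    rw [D_add_incr u v m, D_fun_add, D_fun_add]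
    simp only [Pi.add_apply]
    rw [congrFun (h3 a u v) 0]
    simp [hT]
  have s12 : ∀ a b, T b a = T a b := by
    intro a b
    exact congrFun (D_comm b a m) 0
  have const : ∀ a b x, D a (D b m) x = T a b := by
    intro a b x
    show _ = D a (D b m) 0
    have h : D a (D b m) (0 + x) - D a (D b m) 0 = 0 := congrFun (h3 x a b) 0
    rw [zero_add] at h
    exact sub_eq_zero.1 h
  have ident : ∀ a b x : V, D a (D b (fun u => (2:ℚ)⁻¹ • T u u)) x = T a b := by
    intro a b x
    have hfun : (fun u => (2:ℚ)⁻¹ • T u u) = (2:ℚ)⁻¹ • (fun u => T u u) := rfl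
    rw [hfun, D_fun_smul, D_fun_smul, Pi.smul_apply, poly2 T add1 add2 x a b]
    have e21 : T b a = T a b := by rw [s12]
    rw [e21]
    module
  exact ⟨T, add1, add2, s12, const, ident⟩

lemma mixed5 (aa bb c₁ c₂ c₃ c₄ c₅ c₆ : ℚ)
    (ha : aa ≠ 0) (hb : bb ≠ 0) (hc₃ : c₃ ≠ 0)
    (f : V → B)
    (hf : ∀ x y : V,
      c₁ • f (aa • x + bb • y) + c₂ • f (aa • x - bb • y) =
        c₃ • f x + c₄ • f y + c₅ • f (x + y) + c₆ • f (x - y)) :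
    ∀ y1 y2 y3 y4 w : V, D y1 (D y2 (D y3 (D y4 (D w f)))) = (0 : V → B) := by
  intro y1 y2 y3 y4 w
  set r : ℚ := bb / aa with hr
  have hrne : r ≠ 0 := div_ne_zero hb ha
  have har : ∀ u : V, aa • (r • u) = bb • u := by
    intro u
    rw [smul_smul]
    congr 1
    rw [hr]; field_simp
  have har2 : ∀ u : V, aa • ((-r) • u) = -(bb • u) := by
    intro u
    rw [smul_smul]
    rw [show aa * (-r) = -bb by rw [hr]; field_simp]
    rw [neg_smul]
  set S : Finset ℚ := {r, -r, 0, 1, -1} with hS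
  set g : ℚ → V → B := fun γ t =>
    (if γ = r then c₁ • f (aa • t + aa • w) - c₁ • f (aa • t) else 0) +
    (if γ = -r then c₂ • f (aa • t + aa • w) - c₂ • f (aa • t) else 0) +
    (if γ = 0 then c₃ • f t - c₃ • f (t + w) else 0) +
    (if γ = 1 then c₅ • f t - c₅ • f (t + w) else 0) +
    (if γ = -1 then c₆ • f t - c₆ • f (t + w) else 0) with hg
  have hmem1 : r ∈ S := by simp [hS]
  have hmem2 : -r ∈ S := by simp [hS]
  have hmem3 : (0:ℚ) ∈ S := by simp [hS]
  have hmem4 : (1:ℚ) ∈ S := by simp [hS]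
  have hmem5 : (-1:ℚ) ∈ S := by simp [hS]
  have hsum : ∀ x y : V, ∑ γ ∈ S, g γ (x + γ • y) = 0 := by
    intro x y
    simp only [hg]
    rw [Finset.sum_add_distrib, Finset.sum_add_distrib, Finset.sum_add_distrib,
      Finset.sum_add_distrib]
    rw [Finset.sum_ite_eq' S r
      (fun γ => c₁ • f (aa • (x + γ • y) + aa • w) - c₁ • f (aa • (x + γ • y)))]
    rw [Finset.sum_ite_eq' S (-r)
      (fun γ => c₂ • f (aa • (x + γ • y) + aa • w) - c₂ • f (aa • (x + γ • y)))]
    rw [Finset.sum_ite_eq' S 0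
      (fun γ => c₃ • f (x + γ • y) - c₃ • f ((x + γ • y) + w))]
    rw [Finset.sum_ite_eq' S 1
      (fun γ => c₅ • f (x + γ • y) - c₅ • f ((x + γ • y) + w))]
    rw [Finset.sum_ite_eq' S (-1)
      (fun γ => c₆ • f (x + γ • y) - c₆ • f ((x + γ • y) + w))]
    rw [if_pos hmem1, if_pos hmem2, if_pos hmem3, if_pos hmem4, if_pos hmem5]
    rw [show aa • (x + r • y) + aa • w = aa • (x + w) + bb • y by
      rw [smul_add, har, smul_add]; abel]
    rw [show aa • (x + r • y) = aa • x + bb • y by rw [smul_add, har]]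
    rw [show aa • (x + (-r) • y) + aa • w = aa • (x + w) - bb • y by
      rw [smul_add, har2, smul_add]; abel]
    rw [show aa • (x + (-r) • y) = aa • x - bb • y by rw [smul_add, har2]; abel]
    rw [show x + (0:ℚ) • y = x by simp]
    rw [show (x + (1:ℚ) • y) + w = (x + w) + y by rw [one_smul]; abel]
    rw [show x + (1:ℚ) • y = x + y by rw [one_smul]]
    rw [show (x + (-1:ℚ) • y) + w = (x + w) - y by rw [neg_one_smul]; abel]
    rw [show x + (-1:ℚ) • y = x - y by rw [neg_one_smul]; abel]
    have key : c₁ • f (aa • (x + w) + bb • y) - c₁ • f (aa • x + bb • y) +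
        (c₂ • f (aa • (x + w) - bb • y) - c₂ • f (aa • x - bb • y)) +
        (c₃ • f x - c₃ • f (x + w)) + (c₅ • f (x + y) - c₅ • f ((x + w) + y)) +
        (c₆ • f (x - y) - c₆ • f ((x + w) - y)) =
        (c₁ • f (aa • (x + w) + bb • y) + c₂ • f (aa • (x + w) - bb • y)) -
          (c₃ • f (x + w) + c₄ • f y + c₅ • f ((x + w) + y) + c₆ • f ((x + w) - y)) -
        ((c₁ • f (aa • x + bb • y) + c₂ • f (aa • x - bb • y)) -
          (c₃ • f x + c₄ • f y + c₅ • f (x + y) + c₆ • f (x - y))) := by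
      abel
    rw [key, hf (x + w) y, hf x y]
    abel
  have hcard : S.card ≤ 5 := by
    rw [hS]
    refine le_trans (Finset.card_insert_le _ _) (Nat.succ_le_succ ?_)
    refine le_trans (Finset.card_insert_le _ _) (Nat.succ_le_succ ?_)
    refine le_trans (Finset.card_insert_le _ _) (Nat.succ_le_succ ?_)
    refine le_trans (Finset.card_insert_le _ _) (Nat.succ_le_succ ?_)
    simp
  have hkey := szek 4 S g hcard hsum 0 hmem3 [y1, y2, y3, y4] rfl
  have hg0 : g 0 = (-c₃) • (D w f) := by
    funext t
    have e1 : ¬ ((0:ℚ) = r) := fun h => hrne h.symm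
    have e2 : ¬ ((0:ℚ) = -r) := fun h => hrne (neg_eq_zero.1 h.symm)
    have e4 : ¬ ((0:ℚ) = 1) := by norm_num
    have e5 : ¬ ((0:ℚ) = -1) := by norm_num
    simp only [hg, e1, e2, e4, e5, if_false, if_pos rfl, ite_false, if_true]
    simp only [D, Pi.smul_apply, neg_smul, smul_sub]
    abel
  rw [hg0, DL_smul] at hkey
  exact smul_cancel (neg_ne_zero.2 hc₃) hkey

lemma pack4 (T : V → V → V → V → B) (c' : ℚ)
    (a1 : ∀ u v b c d, T (u + v) b c d = T u b c d + T v b c d)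
    (a2 : ∀ a u v c d, T a (u + v) c d = T a u c d + T a v c d)
    (a3 : ∀ a b u v d, T a b (u + v) d = T a b u d + T a b v d)
    (a4 : ∀ a b c u v, T a b c (u + v) = T a b c u + T a b c v)
    (s12 : ∀ a b c d, T b a c d = T a b c d)
    (s23 : ∀ a b c d, T a c b d = T a b c d)
    (s34 : ∀ a b c d, T a b d c = T a b c d) :
    MultiAdditive (fun v : Fin 4 → V => c' • T (v 0) (v 1) (v 2) (v 3)) ∧
    SymmetricFn (fun v : Fin 4 → V => c' • T (v 0) (v 1) (v 2) (v 3)) := by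
  constructor
  · intro i v x y
    beta_reduce
    fin_cases i <;> simp only [Function.update_apply, Fin.ext_iff] <;> norm_num [show ((3:Fin 4)).val = 3 from rfl]
    · rw [a1, smul_add]
    · rw [a2, smul_add]
    · rw [a3, smul_add]
    · rw [a4, smul_add]
  · intro σ
    refine Equiv.Perm.swap_induction_on σ ?_ ?_
    · intro v
      simp
    · intro σ' i j hij ih v
      have hc : v ∘ ⇑(Equiv.swap i j * σ') = (v ∘ ⇑(Equiv.swap i j)) ∘ ⇑σ' := by
        funext t; simp [Equiv.Perm.mul_apply]
      rw [hc, ih]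
      beta_reduce
      simp only [Function.comp_apply]
      fin_cases i <;> fin_cases j
      · exact absurd rfl hij
      · simp only [Equiv.swap_apply_def, Fin.ext_iff]
        norm_num [show ((3:Fin 4)).val = 3 from rfl, show (⟨0, by norm_num⟩ : Fin 4) = 0 from rfl, show (⟨1, by norm_num⟩ : Fin 4) = 1 from rfl, show (⟨2, by norm_num⟩ : Fin 4) = 2 from rfl, show (⟨3, by norm_num⟩ : Fin 4) = 3 from rfl]
        rw [s12]
      · simp only [Equiv.swap_apply_def, Fin.ext_iff]
        norm_num [show ((3:Fin 4)).val = 3 from rfl, show (⟨0, by norm_num⟩ : Fin 4) = 0 from rfl, show (⟨1, by norm_num⟩ : Fin 4) = 1 from rfl, show (⟨2, by norm_num⟩ : Fin 4) = 2 from rfl, show (⟨3, by norm_num⟩ : Fin 4) = 3 from rfl]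
        rw [s12, s23, s12]
      · simp only [Equiv.swap_apply_def, Fin.ext_iff]
        norm_num [show ((3:Fin 4)).val = 3 from rfl, show (⟨0, by norm_num⟩ : Fin 4) = 0 from rfl, show (⟨1, by norm_num⟩ : Fin 4) = 1 from rfl, show (⟨2, by norm_num⟩ : Fin 4) = 2 from rfl, show (⟨3, by norm_num⟩ : Fin 4) = 3 from rfl]
        rw [s12, s23, s34, s23, s12]
      · simp only [Equiv.swap_apply_def, Fin.ext_iff]
        norm_num [show ((3:Fin 4)).val = 3 from rfl, show (⟨0, by norm_num⟩ : Fin 4) = 0 from rfl, show (⟨1, by norm_num⟩ : Fin 4) = 1 from rfl, show (⟨2, by norm_num⟩ : Fin 4) = 2 from rfl, show (⟨3, by norm_num⟩ : Fin 4) = 3 from rfl]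
        rw [s12]
      · exact absurd rfl hij
      · simp only [Equiv.swap_apply_def, Fin.ext_iff]
        norm_num [show ((3:Fin 4)).val = 3 from rfl, show (⟨0, by norm_num⟩ : Fin 4) = 0 from rfl, show (⟨1, by norm_num⟩ : Fin 4) = 1 from rfl, show (⟨2, by norm_num⟩ : Fin 4) = 2 from rfl, show (⟨3, by norm_num⟩ : Fin 4) = 3 from rfl]
        rw [s23]
      · simp only [Equiv.swap_apply_def, Fin.ext_iff]
        norm_num [show ((3:Fin 4)).val = 3 from rfl, show (⟨0, by norm_num⟩ : Fin 4) = 0 from rfl, show (⟨1, by norm_num⟩ : Fin 4) = 1 from rfl, show (⟨2, by norm_num⟩ : Fin 4) = 2 from rfl, show (⟨3, by norm_num⟩ : Fin 4) = 3 from rfl]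
        rw [s23, s34, s23]
      · simp only [Equiv.swap_apply_def, Fin.ext_iff]
        norm_num [show ((3:Fin 4)).val = 3 from rfl, show (⟨0, by norm_num⟩ : Fin 4) = 0 from rfl, show (⟨1, by norm_num⟩ : Fin 4) = 1 from rfl, show (⟨2, by norm_num⟩ : Fin 4) = 2 from rfl, show (⟨3, by norm_num⟩ : Fin 4) = 3 from rfl]
        rw [s12, s23, s12]
      · simp only [Equiv.swap_apply_def, Fin.ext_iff]
        norm_num [show ((3:Fin 4)).val = 3 from rfl, show (⟨0, by norm_num⟩ : Fin 4) = 0 from rfl, show (⟨1, by norm_num⟩ : Fin 4) = 1 from rfl, show (⟨2, by norm_num⟩ : Fin 4) = 2 from rfl, show (⟨3, by norm_num⟩ : Fin 4) = 3 from rfl]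
        rw [s23]
      · exact absurd rfl hij
      · simp only [Equiv.swap_apply_def, Fin.ext_iff]
        norm_num [show ((3:Fin 4)).val = 3 from rfl, show (⟨0, by norm_num⟩ : Fin 4) = 0 from rfl, show (⟨1, by norm_num⟩ : Fin 4) = 1 from rfl, show (⟨2, by norm_num⟩ : Fin 4) = 2 from rfl, show (⟨3, by norm_num⟩ : Fin 4) = 3 from rfl]
        rw [s34]
      · simp only [Equiv.swap_apply_def, Fin.ext_iff]
        norm_num [show ((3:Fin 4)).val = 3 from rfl, show (⟨0, by norm_num⟩ : Fin 4) = 0 from rfl, show (⟨1, by norm_num⟩ : Fin 4) = 1 from rfl, show (⟨2, by norm_num⟩ : Fin 4) = 2 from rfl, show (⟨3, by norm_num⟩ : Fin 4) = 3 from rfl]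
        rw [s12, s23, s34, s23, s12]
      · simp only [Equiv.swap_apply_def, Fin.ext_iff]
        norm_num [show ((3:Fin 4)).val = 3 from rfl, show (⟨0, by norm_num⟩ : Fin 4) = 0 from rfl, show (⟨1, by norm_num⟩ : Fin 4) = 1 from rfl, show (⟨2, by norm_num⟩ : Fin 4) = 2 from rfl, show (⟨3, by norm_num⟩ : Fin 4) = 3 from rfl]
        rw [s23, s34, s23]
      · simp only [Equiv.swap_apply_def, Fin.ext_iff]
        norm_num [show ((3:Fin 4)).val = 3 from rfl, show (⟨0, by norm_num⟩ : Fin 4) = 0 from rfl, show (⟨1, by norm_num⟩ : Fin 4) = 1 from rfl, show (⟨2, by norm_num⟩ : Fin 4) = 2 from rfl, show (⟨3, by norm_num⟩ : Fin 4) = 3 from rfl]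
        rw [s34]
      · exact absurd rfl hij


lemma pack3 (T : V → V → V → B) (c' : ℚ)
    (a1 : ∀ b c u v : V, T (u + v) b c = T u b c + T v b c)
    (a2 : ∀ a c u v : V, T a (u + v) c = T a u c + T a v c)
    (a3 : ∀ a b u v : V, T a b (u + v) = T a b u + T a b v)
    (s12 : ∀ a b c : V, T b a c = T a b c)
    (s23 : ∀ a b c : V, T a c b = T a b c) :
    MultiAdditive (fun v : Fin 3 → V => c' • T (v 0) (v 1) (v 2)) ∧
    SymmetricFn (fun v : Fin 3 → V => c' • T (v 0) (v 1) (v 2)) := by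
  constructor
  · intro i v x y
    beta_reduce
    fin_cases i <;> simp only [Function.update_apply, Fin.ext_iff] <;> norm_num [show ((2:Fin 3)).val = 2 from rfl, show (⟨0, by norm_num⟩ : Fin 3) = 0 from rfl, show (⟨1, by norm_num⟩ : Fin 3) = 1 from rfl, show (⟨2, by norm_num⟩ : Fin 3) = 2 from rfl]
    · rw [a1, smul_add]
    · rw [a2, smul_add]
    · rw [a3, smul_add]
  · intro σ
    refine Equiv.Perm.swap_induction_on σ ?_ ?_
    · intro v
      simp
    · intro σ' i j hij ih v
      have hc : v ∘ ⇑(Equiv.swap i j * σ') = (v ∘ ⇑(Equiv.swap i j)) ∘ ⇑σ' := by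
        funext t; simp [Equiv.Perm.mul_apply]
      rw [hc, ih]
      beta_reduce
      simp only [Function.comp_apply]
      fin_cases i <;> fin_cases j
      · exact absurd rfl hij
      · simp only [Equiv.swap_apply_def, Fin.ext_iff]
        norm_num [show ((2:Fin 3)).val = 2 from rfl, show (⟨0, by norm_num⟩ : Fin 3) = 0 from rfl, show (⟨1, by norm_num⟩ : Fin 3) = 1 from rfl, show (⟨2, by norm_num⟩ : Fin 3) = 2 from rfl]
        rw [s12]
      · simp only [Equiv.swap_apply_def, Fin.ext_iff]
        norm_num [show ((2:Fin 3)).val = 2 from rfl, show (⟨0, by norm_num⟩ : Fin 3) = 0 from rfl, show (⟨1, by norm_num⟩ : Fin 3) = 1 from rfl, show (⟨2, by norm_num⟩ : Fin 3) = 2 from rfl]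
        rw [s12, s23, s12]
      · simp only [Equiv.swap_apply_def, Fin.ext_iff]
        norm_num [show ((2:Fin 3)).val = 2 from rfl, show (⟨0, by norm_num⟩ : Fin 3) = 0 from rfl, show (⟨1, by norm_num⟩ : Fin 3) = 1 from rfl, show (⟨2, by norm_num⟩ : Fin 3) = 2 from rfl]
        rw [s12]
      · exact absurd rfl hij
      · simp only [Equiv.swap_apply_def, Fin.ext_iff]
        norm_num [show ((2:Fin 3)).val = 2 from rfl, show (⟨0, by norm_num⟩ : Fin 3) = 0 from rfl, show (⟨1, by norm_num⟩ : Fin 3) = 1 from rfl, show (⟨2, by norm_num⟩ : Fin 3) = 2 from rfl]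
        rw [s23]
      · simp only [Equiv.swap_apply_def, Fin.ext_iff]
        norm_num [show ((2:Fin 3)).val = 2 from rfl, show (⟨0, by norm_num⟩ : Fin 3) = 0 from rfl, show (⟨1, by norm_num⟩ : Fin 3) = 1 from rfl, show (⟨2, by norm_num⟩ : Fin 3) = 2 from rfl]
        rw [s12, s23, s12]
      · simp only [Equiv.swap_apply_def, Fin.ext_iff]
        norm_num [show ((2:Fin 3)).val = 2 from rfl, show (⟨0, by norm_num⟩ : Fin 3) = 0 from rfl, show (⟨1, by norm_num⟩ : Fin 3) = 1 from rfl, show (⟨2, by norm_num⟩ : Fin 3) = 2 from rfl]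
        rw [s23]
      · exact absurd rfl hij

lemma pack2 (T : V → V → B) (c' : ℚ)
    (a1 : ∀ b u v : V, T (u + v) b = T u b + T v b)
    (a2 : ∀ a u v : V, T a (u + v) = T a u + T a v)
    (s12 : ∀ a b : V, T b a = T a b) :
    MultiAdditive (fun v : Fin 2 → V => c' • T (v 0) (v 1)) ∧
    SymmetricFn (fun v : Fin 2 → V => c' • T (v 0) (v 1)) := by
  constructor
  · intro i v x y
    beta_reduce
    fin_cases i <;> simp only [Function.update_apply, Fin.ext_iff] <;> norm_num [show ((1:Fin 2)).val = 1 from rfl, show (⟨0, by norm_num⟩ : Fin 2) = 0 from rfl, show (⟨1, by norm_num⟩ : Fin 2) = 1 from rfl]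
    · rw [a1, smul_add]
    · rw [a2, smul_add]
  · intro σ
    refine Equiv.Perm.swap_induction_on σ ?_ ?_
    · intro v
      simp
    · intro σ' i j hij ih v
      have hc : v ∘ ⇑(Equiv.swap i j * σ') = (v ∘ ⇑(Equiv.swap i j)) ∘ ⇑σ' := by
        funext t; simp [Equiv.Perm.mul_apply]
      rw [hc, ih]
      beta_reduce
      simp only [Function.comp_apply]
      fin_cases i <;> fin_cases j
      · exact absurd rfl hij
      · simp only [Equiv.swap_apply_def, Fin.ext_iff]
        norm_num [show ((1:Fin 2)).val = 1 from rfl, show (⟨0, by norm_num⟩ : Fin 2) = 0 from rfl, show (⟨1, by norm_num⟩ : Fin 2) = 1 from rfl]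
        rw [s12]
      · simp only [Equiv.swap_apply_def, Fin.ext_iff]
        norm_num [show ((1:Fin 2)).val = 1 from rfl, show (⟨0, by norm_num⟩ : Fin 2) = 0 from rfl, show (⟨1, by norm_num⟩ : Fin 2) = 1 from rfl]
        rw [s12]
      · exact absurd rfl hij

lemma pack1 (T : V → B) (c' : ℚ)
    (a1 : ∀ u v : V, T (u + v) = T u + T v) :
    MultiAdditive (fun v : Fin 1 → V => c' • T (v 0)) ∧
    SymmetricFn (fun v : Fin 1 → V => c' • T (v 0)) := by
  constructor
  · intro i v x y
    beta_reduce
    fin_cases i <;> simp only [Function.update_apply, Fin.ext_iff] <;> norm_num [show (⟨0, by norm_num⟩ : Fin 1) = 0 from rfl]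
    rw [a1, smul_add]
  · intro σ
    refine Equiv.Perm.swap_induction_on σ ?_ ?_
    · intro v
      simp
    · intro σ' i j hij ih v
      have hc : v ∘ ⇑(Equiv.swap i j * σ') = (v ∘ ⇑(Equiv.swap i j)) ∘ ⇑σ' := by
        funext t; simp [Equiv.Perm.mul_apply]
      rw [hc, ih]
      beta_reduce
      simp only [Function.comp_apply]
      fin_cases i <;> fin_cases j
      · exact absurd rfl hij

lemma additive_qsmul (φ : V → B) (h : ∀ u v : V, φ (u + v) = φ u + φ v) (q : ℚ) (u : V) :
    φ (q • u) = q • φ u :=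
  map_rat_smul (AddMonoidHom.mk' φ h) q u

lemma pow_abs_inj {t : ℚ} (h0 : 0 < t) (h1 : t ≠ 1) {i j : ℕ} (h : t ^ i = t ^ j) : i = j := by
  rcases Nat.lt_trichotomy i j with hij | hij | hij
  · exfalso
    rcases lt_or_gt_of_ne h1 with hlt | hgt
    · have := pow_lt_pow_right_of_lt_one₀ h0 hlt hij
      rw [h] at this
      exact lt_irrefl _ this
    · have := pow_lt_pow_right₀ hgt hij
      rw [h] at this
      exact lt_irrefl _ this
  · exact hij
  · exfalso
    rcases lt_or_gt_of_ne h1 with hlt | hgt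
    · have := pow_lt_pow_right_of_lt_one₀ h0 hlt hij
      rw [h] at this
      exact lt_irrefl _ this
    · have := pow_lt_pow_right₀ hgt hij
      rw [h] at this
      exact lt_irrefl _ this

end Stmt7Aux

open Stmt7Aux in
theorem stmt_7 {V B : Type*} [AddCommGroup V] [Module ℚ V] [AddCommGroup B] [Module ℚ B]
    (a b c₁ c₂ c₃ c₄ c₅ c₆ : ℚ)
    (ha : a ≠ 0) (hb : b ≠ 0) (hc₁ : c₁ ≠ 0) (hc₃ : c₃ ≠ 0) (hc₁₂ : c₁ + c₂ ≠ 0)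
    (hlam0 : |(c₃ + c₅ + c₆) / (c₁ + c₂)| ≠ 0)
    (hlam1 : |(c₃ + c₅ + c₆) / (c₁ + c₂)| ≠ 1)
    (f : V → B) (hf0 : f 0 = 0) (hfne : f ≠ 0)
    (hf : ∀ x y : V,
      c₁ • f (a • x + b • y) + c₂ • f (a • x - b • y) =
        c₃ • f x + c₄ • f y + c₅ • f (x + y) + c₆ • f (x - y)) :
    ∃! k : ℕ, k ∈ Finset.Icc 1 4 ∧
      |a| ^ k = |(c₃ + c₅ + c₆) / (c₁ + c₂)| ∧
      ∃ A : (Fin k → V) → B, MultiAdditive A ∧ SymmetricFn A ∧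
        ∀ x : V, f x = A (fun _ => x) := by
  classical
  set lam : ℚ := (c₃ + c₅ + c₆) / (c₁ + c₂) with hlamdef
  have heig : ∀ x : V, f (a • x) = lam • f x := by
    intro x
    have h := hf x 0
    simp only [smul_zero, add_zero, sub_zero, hf0] at h
    have h2 : (c₁ + c₂) • f (a • x) = (c₃ + c₅ + c₆) • f x := by
      rw [add_smul, add_smul, add_smul]
      exact h
    have h3 := congrArg (fun z : B => (c₁ + c₂)⁻¹ • z) h2
    simp only [smul_smul, inv_mul_cancel₀ hc₁₂, one_smul] at h3
    rw [h3]
    congr 1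
    rw [hlamdef, div_eq_inv_mul]
  have h5 : ∀ p q r s t : V, D p (D q (D r (D s (D t f)))) = (0 : V → B) :=
    fun p q r s t => mixed5 a b c₁ c₂ c₃ c₄ c₅ c₆ ha hb hc₃ f hf p q r s t
  obtain ⟨T4, t4a1, t4a2, t4a3, t4a4, t4s12, t4s23, t4s34, t4const, t4ident⟩ := level4 f h5
  set M4 : V → B := fun u => (24:ℚ)⁻¹ • T4 u u u u with hM4
  set f3 : V → B := f - M4 with hf3
  have hD4 : ∀ p q r s : V, D p (D q (D r (D s f3))) = (0 : V → B) := by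
    intro p q r s
    funext x
    rw [hf3, D_fun_sub, D_fun_sub, D_fun_sub, D_fun_sub, Pi.sub_apply,
      t4const p q r s x, t4ident p q r s x, sub_self]
    simp
  obtain ⟨T3, t3a1, t3a2, t3a3, t3s12, t3s23, t3const, t3ident⟩ := level3 f3 hD4
  set M3 : V → B := fun u => (6:ℚ)⁻¹ • T3 u u u with hM3
  set f2 : V → B := f3 - M3 with hf2
  have hD3 : ∀ p q r : V, D p (D q (D r f2)) = (0 : V → B) := by
    intro p q r
    funext x
    rw [hf2, D_fun_sub, D_fun_sub, D_fun_sub, Pi.sub_apply,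
      t3const p q r x, t3ident p q r x, sub_self]
    simp
  obtain ⟨T2, t2a1, t2a2, t2s12, t2const, t2ident⟩ := level2 f2 hD3
  set M2 : V → B := fun u => (2:ℚ)⁻¹ • T2 u u with hM2
  set f1 : V → B := f2 - M2 with hf1
  have hD2 : ∀ p q : V, D p (D q f1) = (0 : V → B) := by
    intro p q
    funext x
    rw [hf1, D_fun_sub, D_fun_sub, Pi.sub_apply,
      t2const p q x, t2ident p q x, sub_self]
    simp
  -- values at zero
  have hT400 : T4 0 0 0 0 = 0 := by
    have h := t4a1 0 0 0 0 0
    rw [add_zero] at h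
    exact left_eq_add.1 h
  have hM40 : M4 0 = 0 := by rw [congrFun hM4 0, hT400, smul_zero]
  have hf30 : f3 0 = 0 := by rw [hf3, Pi.sub_apply, hf0, hM40, sub_zero]
  have hT300 : T3 0 0 0 = 0 := by
    have h := t3a1 0 0 0 0
    rw [add_zero] at h
    exact left_eq_add.1 h
  have hM30 : M3 0 = 0 := by rw [congrFun hM3 0, hT300, smul_zero]
  have hf20 : f2 0 = 0 := by rw [hf2, Pi.sub_apply, hf30, hM30, sub_zero]
  have hT200 : T2 0 0 = 0 := by
    have h := t2a1 0 0 0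
    rw [add_zero] at h
    exact left_eq_add.1 h
  have hM20 : M2 0 = 0 := by rw [congrFun hM2 0, hT200, smul_zero]
  have hf10 : f1 0 = 0 := by rw [hf1, Pi.sub_apply, hf20, hM20, sub_zero]
  -- f1 is additive
  have hM1add : ∀ u v : V, f1 (u + v) = f1 u + f1 v := by
    intro u v
    have h0 := congrFun (hD2 u v) 0
    simp only [Pi.zero_apply] at h0
    have h : f1 ((0 + u) + v) - f1 (0 + u) - (f1 (0 + v) - f1 0) = 0 := h0
    rw [zero_add, zero_add, hf10, sub_zero, sub_sub] at h
    exact sub_eq_zero.1 h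
  -- decomposition
  have hdecomp : ∀ x : V, f x = M4 x + M3 x + M2 x + f1 x := by
    intro x
    have e1 : f1 x = f2 x - M2 x := by rw [hf1, Pi.sub_apply]
    have e2 : f2 x = f3 x - M3 x := by rw [hf2, Pi.sub_apply]
    have e3 : f3 x = f x - M4 x := by rw [hf3, Pi.sub_apply]
    rw [e1, e2, e3]
    abel
  -- homogeneity
  have hf1hom : ∀ (q : ℚ) (u : V), f1 (q • u) = q • f1 u :=
    fun q u => additive_qsmul f1 hM1add q u
  have hM2hom : ∀ (q : ℚ) (u : V), M2 (q • u) = q ^ 2 • M2 u := by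
    intro q u
    have s1 := additive_qsmul (fun p => T2 p (q • u)) (fun p p' => t2a1 p p' (q • u)) q u
    have s2 := additive_qsmul (fun p => T2 u p) (fun p p' => t2a2 u p p') q u
    beta_reduce at s1 s2
    simp only [hM2]
    rw [s1, s2]
    module
  have hM3hom : ∀ (q : ℚ) (u : V), M3 (q • u) = q ^ 3 • M3 u := by
    intro q u
    have s1 := additive_qsmul (fun p => T3 p (q • u) (q • u))
      (fun p p' => t3a1 p p' (q • u) (q • u)) q u
    have s2 := additive_qsmul (fun p => T3 u p (q • u))
      (fun p p' => t3a2 u p p' (q • u)) q u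
    have s3 := additive_qsmul (fun p => T3 u u p)
      (fun p p' => t3a3 u u p p') q u
    beta_reduce at s1 s2 s3
    simp only [hM3]
    rw [s1, s2, s3]
    module
  have hM4hom : ∀ (q : ℚ) (u : V), M4 (q • u) = q ^ 4 • M4 u := by
    intro q u
    have s1 := additive_qsmul (fun p => T4 p (q • u) (q • u) (q • u))
      (fun p p' => t4a1 p p' (q • u) (q • u) (q • u)) q u
    have s2 := additive_qsmul (fun p => T4 u p (q • u) (q • u))
      (fun p p' => t4a2 u p p' (q • u) (q • u)) q u
    have s3 := additive_qsmul (fun p => T4 u u p (q • u))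
      (fun p p' => t4a3 u u p p' (q • u)) q u
    have s4 := additive_qsmul (fun p => T4 u u u p)
      (fun p p' => t4a4 u u u p p') q u
    beta_reduce at s1 s2 s3 s4
    simp only [hM4]
    rw [s1, s2, s3, s4]
    module
  -- elimination equations
  have helim : ∀ (x : V) (n : ℚ),
      n • ((a - lam) • f1 x) + n ^ 2 • ((a ^ 2 - lam) • M2 x) +
        n ^ 3 • ((a ^ 3 - lam) • M3 x) + n ^ 4 • ((a ^ 4 - lam) • M4 x) = 0 := by
    intro x n
    have h := heig (n • x)
    rw [hdecomp (a • (n • x)), hdecomp (n • x), hM4hom a (n • x), hM4hom n x,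
      hM3hom a (n • x), hM3hom n x, hM2hom a (n • x), hM2hom n x,
      hf1hom a (n • x), hf1hom n x] at h
    have h0 := sub_eq_zero.2 h
    rw [← h0]
    module
  have hb1 : ∀ x : V, (a - lam) • f1 x = 0 := by
    intro x
    have e1 := helim x 1
    have e2 := helim x 2
    have e3 := helim x 3
    have e4 := helim x 4
    calc (a - lam) • f1 x
        = (4:ℚ) • ((1:ℚ) • ((a - lam) • f1 x) + ((1:ℚ)^2) • ((a^2 - lam) • M2 x) + ((1:ℚ)^3) • ((a^3 - lam) • M3 x) + ((1:ℚ)^4) • ((a^4 - lam) • M4 x)) +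
          (-3:ℚ) • ((2:ℚ) • ((a - lam) • f1 x) + ((2:ℚ)^2) • ((a^2 - lam) • M2 x) + ((2:ℚ)^3) • ((a^3 - lam) • M3 x) + ((2:ℚ)^4) • ((a^4 - lam) • M4 x)) +
          (4/3:ℚ) • ((3:ℚ) • ((a - lam) • f1 x) + ((3:ℚ)^2) • ((a^2 - lam) • M2 x) + ((3:ℚ)^3) • ((a^3 - lam) • M3 x) + ((3:ℚ)^4) • ((a^4 - lam) • M4 x)) +
          (-1/4:ℚ) • ((4:ℚ) • ((a - lam) • f1 x) + ((4:ℚ)^2) • ((a^2 - lam) • M2 x) + ((4:ℚ)^3) • ((a^3 - lam) • M3 x) + ((4:ℚ)^4) • ((a^4 - lam) • M4 x)) := by module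
      _ = 0 := by rw [e1, e2, e3, e4]; simp
  have hb2 : ∀ x : V, (a^2 - lam) • M2 x = 0 := by
    intro x
    have e1 := helim x 1
    have e2 := helim x 2
    have e3 := helim x 3
    have e4 := helim x 4
    calc (a^2 - lam) • M2 x
        = (-13/3:ℚ) • ((1:ℚ) • ((a - lam) • f1 x) + ((1:ℚ)^2) • ((a^2 - lam) • M2 x) + ((1:ℚ)^3) • ((a^3 - lam) • M3 x) + ((1:ℚ)^4) • ((a^4 - lam) • M4 x)) +
          (19/4:ℚ) • ((2:ℚ) • ((a - lam) • f1 x) + ((2:ℚ)^2) • ((a^2 - lam) • M2 x) + ((2:ℚ)^3) • ((a^3 - lam) • M3 x) + ((2:ℚ)^4) • ((a^4 - lam) • M4 x)) +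
          (-7/3:ℚ) • ((3:ℚ) • ((a - lam) • f1 x) + ((3:ℚ)^2) • ((a^2 - lam) • M2 x) + ((3:ℚ)^3) • ((a^3 - lam) • M3 x) + ((3:ℚ)^4) • ((a^4 - lam) • M4 x)) +
          (11/24:ℚ) • ((4:ℚ) • ((a - lam) • f1 x) + ((4:ℚ)^2) • ((a^2 - lam) • M2 x) + ((4:ℚ)^3) • ((a^3 - lam) • M3 x) + ((4:ℚ)^4) • ((a^4 - lam) • M4 x)) := by module
      _ = 0 := by rw [e1, e2, e3, e4]; simp
  have hb3 : ∀ x : V, (a^3 - lam) • M3 x = 0 := by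
    intro x
    have e1 := helim x 1
    have e2 := helim x 2
    have e3 := helim x 3
    have e4 := helim x 4
    calc (a^3 - lam) • M3 x
        = (3/2:ℚ) • ((1:ℚ) • ((a - lam) • f1 x) + ((1:ℚ)^2) • ((a^2 - lam) • M2 x) + ((1:ℚ)^3) • ((a^3 - lam) • M3 x) + ((1:ℚ)^4) • ((a^4 - lam) • M4 x)) +
          (-2:ℚ) • ((2:ℚ) • ((a - lam) • f1 x) + ((2:ℚ)^2) • ((a^2 - lam) • M2 x) + ((2:ℚ)^3) • ((a^3 - lam) • M3 x) + ((2:ℚ)^4) • ((a^4 - lam) • M4 x)) +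
          (7/6:ℚ) • ((3:ℚ) • ((a - lam) • f1 x) + ((3:ℚ)^2) • ((a^2 - lam) • M2 x) + ((3:ℚ)^3) • ((a^3 - lam) • M3 x) + ((3:ℚ)^4) • ((a^4 - lam) • M4 x)) +
          (-1/4:ℚ) • ((4:ℚ) • ((a - lam) • f1 x) + ((4:ℚ)^2) • ((a^2 - lam) • M2 x) + ((4:ℚ)^3) • ((a^3 - lam) • M3 x) + ((4:ℚ)^4) • ((a^4 - lam) • M4 x)) := by module
      _ = 0 := by rw [e1, e2, e3, e4]; simp
  have hb4 : ∀ x : V, (a^4 - lam) • M4 x = 0 := by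
    intro x
    have e1 := helim x 1
    have e2 := helim x 2
    have e3 := helim x 3
    have e4 := helim x 4
    calc (a^4 - lam) • M4 x
        = (-1/6:ℚ) • ((1:ℚ) • ((a - lam) • f1 x) + ((1:ℚ)^2) • ((a^2 - lam) • M2 x) + ((1:ℚ)^3) • ((a^3 - lam) • M3 x) + ((1:ℚ)^4) • ((a^4 - lam) • M4 x)) +
          (1/4:ℚ) • ((2:ℚ) • ((a - lam) • f1 x) + ((2:ℚ)^2) • ((a^2 - lam) • M2 x) + ((2:ℚ)^3) • ((a^3 - lam) • M3 x) + ((2:ℚ)^4) • ((a^4 - lam) • M4 x)) +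
          (-1/6:ℚ) • ((3:ℚ) • ((a - lam) • f1 x) + ((3:ℚ)^2) • ((a^2 - lam) • M2 x) + ((3:ℚ)^3) • ((a^3 - lam) • M3 x) + ((3:ℚ)^4) • ((a^4 - lam) • M4 x)) +
          (1/24:ℚ) • ((4:ℚ) • ((a - lam) • f1 x) + ((4:ℚ)^2) • ((a^2 - lam) • M2 x) + ((4:ℚ)^3) • ((a^3 - lam) • M3 x) + ((4:ℚ)^4) • ((a^4 - lam) • M4 x)) := by module
      _ = 0 := by rw [e1, e2, e3, e4]; simp
  -- case analysis
  by_cases h4z : ∀ x : V, M4 x = 0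
  case neg =>
    push_neg at h4z
    obtain ⟨x₀, hx₀⟩ := h4z
    have hksub : a ^ 4 - lam = 0 := by
      by_contra hne
      exact hx₀ (smul_cancel hne (hb4 x₀))
    have habsk : |a| ^ 4 = |lam| := by
      rw [← abs_pow, sub_eq_zero.1 hksub]
    have habne1 : |a| ≠ 1 := by
      intro h1
      apply hlam1
      rw [← habsk, h1, one_pow]
    have hapos : (0:ℚ) < |a| := abs_pos.2 ha
    have hne1 : (a - lam) ≠ 0 := by
      intro h0
      have hj : |a| ^ 1 = |lam| := by rw [pow_one, sub_eq_zero.1 h0]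
      exact absurd (pow_abs_inj hapos habne1 (hj.trans habsk.symm)) (by norm_num)
    have z1 : ∀ x : V, f1 x = 0 := fun x => smul_cancel hne1 (hb1 x)
    have hne2 : (a^2 - lam) ≠ 0 := by
      intro h0
      have hj : |a| ^ 2 = |lam| := by rw [← abs_pow, sub_eq_zero.1 h0]
      exact absurd (pow_abs_inj hapos habne1 (hj.trans habsk.symm)) (by norm_num)
    have z2 : ∀ x : V, M2 x = 0 := fun x => smul_cancel hne2 (hb2 x)
    have hne3 : (a^3 - lam) ≠ 0 := by
      intro h0
      have hj : |a| ^ 3 = |lam| := by rw [← abs_pow, sub_eq_zero.1 h0]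
      exact absurd (pow_abs_inj hapos habne1 (hj.trans habsk.symm)) (by norm_num)
    have z3 : ∀ x : V, M3 x = 0 := fun x => smul_cancel hne3 (hb3 x)
    have hfeq : ∀ x : V, f x = M4 x := by
      intro x
      rw [hdecomp x, z3 x, z2 x, z1 x]
      abel
    obtain ⟨hMA, hSym⟩ := pack4 T4 ((24:ℚ)⁻¹) t4a1 t4a2 t4a3 t4a4 t4s12 t4s23 t4s34
    refine ⟨4, ⟨by decide, habsk, ⟨_, hMA, hSym, ?_⟩⟩, ?_⟩
    · intro x
      exact (hfeq x).trans (congrFun hM4 x)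
    · rintro k' ⟨hk'mem, hk'abs, -⟩
      exact pow_abs_inj hapos habne1 (hk'abs.trans habsk.symm)
  case pos =>
  by_cases h3z : ∀ x : V, M3 x = 0
  case neg =>
    push_neg at h3z
    obtain ⟨x₀, hx₀⟩ := h3z
    have hksub : a ^ 3 - lam = 0 := by
      by_contra hne
      exact hx₀ (smul_cancel hne (hb3 x₀))
    have habsk : |a| ^ 3 = |lam| := by
      rw [← abs_pow, sub_eq_zero.1 hksub]
    have habne1 : |a| ≠ 1 := by
      intro h1
      apply hlam1
      rw [← habsk, h1, one_pow]
    have hapos : (0:ℚ) < |a| := abs_pos.2 ha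
    have hne1 : (a - lam) ≠ 0 := by
      intro h0
      have hj : |a| ^ 1 = |lam| := by rw [pow_one, sub_eq_zero.1 h0]
      exact absurd (pow_abs_inj hapos habne1 (hj.trans habsk.symm)) (by norm_num)
    have z1 : ∀ x : V, f1 x = 0 := fun x => smul_cancel hne1 (hb1 x)
    have hne2 : (a^2 - lam) ≠ 0 := by
      intro h0
      have hj : |a| ^ 2 = |lam| := by rw [← abs_pow, sub_eq_zero.1 h0]
      exact absurd (pow_abs_inj hapos habne1 (hj.trans habsk.symm)) (by norm_num)
    have z2 : ∀ x : V, M2 x = 0 := fun x => smul_cancel hne2 (hb2 x)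
    have hfeq : ∀ x : V, f x = M3 x := by
      intro x
      rw [hdecomp x, h4z x, z2 x, z1 x]
      abel
    obtain ⟨hMA, hSym⟩ := pack3 T3 ((6:ℚ)⁻¹) (fun b c u v => t3a1 u v b c) (fun a c u v => t3a2 a u v c) t3a3 t3s12 t3s23
    refine ⟨3, ⟨by decide, habsk, ⟨_, hMA, hSym, ?_⟩⟩, ?_⟩
    · intro x
      exact (hfeq x).trans (congrFun hM3 x)
    · rintro k' ⟨hk'mem, hk'abs, -⟩
      exact pow_abs_inj hapos habne1 (hk'abs.trans habsk.symm)
  case pos =>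
  by_cases h2z : ∀ x : V, M2 x = 0
  case neg =>
    push_neg at h2z
    obtain ⟨x₀, hx₀⟩ := h2z
    have hksub : a ^ 2 - lam = 0 := by
      by_contra hne
      exact hx₀ (smul_cancel hne (hb2 x₀))
    have habsk : |a| ^ 2 = |lam| := by
      rw [← abs_pow, sub_eq_zero.1 hksub]
    have habne1 : |a| ≠ 1 := by
      intro h1
      apply hlam1
      rw [← habsk, h1, one_pow]
    have hapos : (0:ℚ) < |a| := abs_pos.2 ha
    have hne1 : (a - lam) ≠ 0 := by
      intro h0
      have hj : |a| ^ 1 = |lam| := by rw [pow_one, sub_eq_zero.1 h0]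
      exact absurd (pow_abs_inj hapos habne1 (hj.trans habsk.symm)) (by norm_num)
    have z1 : ∀ x : V, f1 x = 0 := fun x => smul_cancel hne1 (hb1 x)
    have hfeq : ∀ x : V, f x = M2 x := by
      intro x
      rw [hdecomp x, h4z x, h3z x, z1 x]
      abel
    obtain ⟨hMA, hSym⟩ := pack2 T2 ((2:ℚ)⁻¹) (fun b u v => t2a1 u v b) t2a2 t2s12
    refine ⟨2, ⟨by decide, habsk, ⟨_, hMA, hSym, ?_⟩⟩, ?_⟩
    · intro x
      exact (hfeq x).trans (congrFun hM2 x)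
    · rintro k' ⟨hk'mem, hk'abs, -⟩
      exact pow_abs_inj hapos habne1 (hk'abs.trans habsk.symm)
  case pos =>
    have h1nz : ¬ ∀ x : V, f1 x = 0 := by
      intro hz
      apply hfne
      funext x
      rw [hdecomp x, h4z x, h3z x, h2z x, hz x]
      simp
    push_neg at h1nz
    obtain ⟨x₀, hx₀⟩ := h1nz
    have hksub : a - lam = 0 := by
      by_contra hne
      exact hx₀ (smul_cancel hne (hb1 x₀))
    have habsk : |a| ^ 1 = |lam| := by
      rw [pow_one, sub_eq_zero.1 hksub]
    have habne1 : |a| ≠ 1 := by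
      intro h1
      apply hlam1
      rw [← habsk, h1, one_pow]
    have hapos : (0:ℚ) < |a| := abs_pos.2 ha

    have hfeq : ∀ x : V, f x = f1 x := by
      intro x
      rw [hdecomp x, h4z x, h3z x, h2z x]
      abel
    obtain ⟨hMA, hSym⟩ := pack1 f1 (1:ℚ) hM1add
    refine ⟨1, ⟨by decide, habsk, ⟨_, hMA, hSym, ?_⟩⟩, ?_⟩
    · intro x
      have hx := hfeq x
      simpa using hx
    · rintro k' ⟨hk'mem, hk'abs, -⟩
      exact pow_abs_inj hapos habne1 (hk'abs.trans habsk.symm)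
end

section
/- Suppose f: V → B is a generalized polynomial function: f(x) = a_0 + Σ_{k=1}^m a_k*(x) where each a_k is symmetric k-additive, with a_m* ≠ 0. If f(0) = 0 and f(ax) = λ f(x) for all x ∈ V, where a ∈ ℚ and λ ∈ ℚ satisfy |λ| ∉ {0, 1} and |a|^k ≠ |λ| for all but one index k ∈ {1, ..., m}, then f equals a single monomial term: f = a_k* for the unique k with a^k = λ. -/
section Aux

variable {V B : Type*} [AddCommGroup V] [Module ℚ V] [AddCommGroup B] [Module ℚ B]

lemma aux_diag_zero {k : ℕ} (A : (Fin k → V) → B) (hA : MultiAdditive A) (hk : 1 ≤ k) :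
    A (fun _ => (0 : V)) = 0 := by
  have h := hA ⟨0, hk⟩ (fun _ => (0 : V)) 0 0
  have hu : Function.update (fun _ : Fin k => (0 : V)) ⟨0, hk⟩ (0 : V)
      = fun _ : Fin k => (0 : V) := by
    funext i; simp [Function.update_apply]
  rw [add_zero, hu] at h
  exact (add_eq_left.mp h.symm)

lemma aux_slot_smul {k : ℕ} (A : (Fin k → V) → B) (hA : MultiAdditive A)
    (i : Fin k) (v : Fin k → V) (q : ℚ) (x : V) :
    A (Function.update v i (q • x)) = q • A (Function.update v i x) := by
  have hz : A (Function.update v i 0) = 0 := by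
    have h := hA i v 0 0
    rw [add_zero] at h
    exact (add_eq_left.mp h.symm)
  let g : V →+ B :=
    { toFun := fun y => A (Function.update v i y)
      map_zero' := hz
      map_add' := fun x y => hA i v x y }
  exact map_rat_smul g q x

lemma aux_diag_smul {k : ℕ} (A : (Fin k → V) → B) (hA : MultiAdditive A)
    (q : ℚ) (x : V) :
    A (fun _ => q • x) = q ^ k • A (fun _ => x) := by
  have H : ∀ j, j ≤ k → A (fun i : Fin k => if (i : ℕ) < j then q • x else x)
      = q ^ j • A (fun _ => x) := by
    intro j
    induction j with
    | zero => intro _; simp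
    | succ n ih =>
      intro hj
      have hn : n < k := hj
      have ihn := ih (Nat.le_of_lt hn)
      have hv1 : (fun i : Fin k => if (i : ℕ) < n + 1 then q • x else x)
          = Function.update (fun i : Fin k => if (i : ℕ) < n then q • x else x)
              ⟨n, hn⟩ (q • x) := by
        funext i
        rw [Function.update_apply]
        by_cases h : i = ⟨n, hn⟩
        · subst h; simp
        · have hne : (i : ℕ) ≠ n := fun hc => h (Fin.ext hc)
          simp only [if_neg h]
          by_cases h2 : (i : ℕ) < n
          · rw [if_pos h2, if_pos (Nat.lt_succ_of_lt h2)]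
          · rw [if_neg h2, if_neg (by omega)]
      have hv2 : Function.update (fun i : Fin k => if (i : ℕ) < n then q • x else x)
          ⟨n, hn⟩ x = fun i : Fin k => if (i : ℕ) < n then q • x else x := by
        funext i
        rw [Function.update_apply]
        by_cases h : i = ⟨n, hn⟩
        · subst h; simp
        · rw [if_neg h]
      rw [hv1, aux_slot_smul A hA, hv2, ihn, smul_smul, ← pow_succ']
  have := H k le_rfl
  simpa using this

lemma aux_poly_zero (m : ℕ) (b : ℕ → B)
    (h : ∀ q : ℚ, ∑ k ∈ Finset.Icc 1 m, q ^ k • b k = 0) :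
    ∀ k ∈ Finset.Icc 1 m, b k = 0 := by
  intro k hk
  rw [← Module.forall_dual_apply_eq_zero_iff ℚ]
  intro φ
  set p : Polynomial ℚ :=
    ∑ j ∈ Finset.Icc 1 m, Polynomial.C (φ (b j)) * Polynomial.X ^ j with hp
  have hpz : p = 0 := by
    apply Polynomial.funext
    intro r
    have := congrArg φ (h r)
    simp only [map_sum, map_smul, map_zero, smul_eq_mul] at this
    simp only [hp, Polynomial.eval_finset_sum, Polynomial.eval_mul, Polynomial.eval_C,
      Polynomial.eval_pow, Polynomial.eval_X, Polynomial.eval_zero]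
    rw [← this]
    exact Finset.sum_congr rfl fun j _ => mul_comm _ _
  have hc : p.coeff k = φ (b k) := by
    rw [hp, Polynomial.finset_sum_coeff]
    rw [Finset.sum_eq_single_of_mem k hk]
    · simp
    · intro j _ hj
      simp [Polynomial.coeff_C_mul, Polynomial.coeff_X_pow, Ne.symm hj]
  rw [hpz] at hc
  simpa using hc.symm

end Aux

theorem stmt_8 {V B : Type*} [AddCommGroup V] [Module ℚ V] [AddCommGroup B] [Module ℚ B]
    (m : ℕ) (f : V → B) (a₀ : B) (A : (k : ℕ) → (Fin k → V) → B)
    (hA : ∀ k ∈ Finset.Icc 1 m, MultiAdditive (A k) ∧ SymmetricFn (A k))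
    (hrep : ∀ x : V, f x = a₀ + ∑ k ∈ Finset.Icc 1 m, A k (fun _ => x))
    (htop : (fun x : V => A m (fun _ => x)) ≠ 0)
    (a lam : ℚ) (hf0 : f 0 = 0) (hhom : ∀ x : V, f (a • x) = lam • f x)
    (hlam0 : |lam| ≠ 0) (hlam1 : |lam| ≠ 1)
    (k₀ : ℕ) (hk₀ : k₀ ∈ Finset.Icc 1 m) (hk₀eq : a ^ k₀ = lam)
    (huniq : ∀ k ∈ Finset.Icc 1 m, k ≠ k₀ → |a| ^ k ≠ |lam|) :
    ∀ x : V, f x = A k₀ (fun _ => x) := by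
  have ha0 : a₀ = 0 := by
    have h0 := hrep 0
    rw [hf0] at h0
    rw [Finset.sum_congr rfl (fun k hk =>
      aux_diag_zero (A k) (hA k hk).1 (Finset.mem_Icc.mp hk).1)] at h0
    simpa using h0.symm
  have key : ∀ y : V, ∑ k ∈ Finset.Icc 1 m, (a ^ k - lam) • A k (fun _ => y) = 0 := by
    intro y
    have h1 := hhom y
    rw [hrep, hrep, ha0, zero_add, smul_add, smul_zero, zero_add, Finset.smul_sum] at h1
    rw [Finset.sum_congr rfl (fun k hk =>
      aux_diag_smul (A k) (hA k hk).1 a y)] at h1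
    have : ∑ k ∈ Finset.Icc 1 m, (a ^ k - lam) • A k (fun _ => y)
        = ∑ k ∈ Finset.Icc 1 m, a ^ k • A k (fun _ => y)
          - ∑ k ∈ Finset.Icc 1 m, lam • A k (fun _ => y) := by
      rw [← Finset.sum_sub_distrib]
      exact Finset.sum_congr rfl fun k _ => sub_smul _ _ _
    rw [this, h1, sub_self]
  intro x
  have hall : ∀ q : ℚ,
      ∑ k ∈ Finset.Icc 1 m, q ^ k • ((a ^ k - lam) • A k (fun _ => x)) = 0 := by
    intro q
    have hkey := key (q • x)
    rw [Finset.sum_congr rfl (fun k hk => by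
      rw [aux_diag_smul (A k) (hA k hk).1 q x])] at hkey
    rw [← hkey]
    exact Finset.sum_congr rfl fun k _ => (smul_comm _ _ _)
  have hzero : ∀ k ∈ Finset.Icc 1 m, k ≠ k₀ → A k (fun _ => x) = 0 := by
    intro k hk hne
    have hb := aux_poly_zero m _ hall k hk
    have hc : a ^ k - lam ≠ 0 := by
      intro h
      apply huniq k hk hne
      rw [← abs_pow, sub_eq_zero.mp h]
    exact (smul_eq_zero.mp hb).resolve_left hc
  rw [hrep x, ha0, zero_add]
  exact Finset.sum_eq_single_of_mem k₀ hk₀ fun k hk hne => hzero k hk hne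
end

section
/- Under the hypotheses of the stability theorem with |λ| > 1 (λ = (c_3+c_5+c_6)/(c_1+c_2)), if ‖Df(x,y)‖ ≤ ψ(x,y) and f(0)=0, then setting y = 0 yields ‖f(ax)/λ - f(x)‖ ≤ ψ(x,0)/|c_3+c_5+c_6| for all x ∈ V; consequently, if ψ(ax,0) ≤ L|λ|ψ(x,0) with L < 1, the sequence f(a^n x)/λ^n is Cauchy in the Banach space X for each x with ψ(x,0) finite, and its limit T(x) satisfies T(ax) = λ T(x). -/
open Filter Topology

theorem stmt_12 {F V X : Type*} [NormedField F] [AddCommGroup V] [Module F V]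
    [NormedAddCommGroup X] [NormedSpace F X] [CompleteSpace X]
    (a b c₁ c₂ c₃ c₄ c₅ c₆ : F)
    (ha : a ≠ 0) (hb : b ≠ 0) (hc₁ : c₁ ≠ 0) (hc₃ : c₃ ≠ 0) (hc₁₂ : c₁ + c₂ ≠ 0)
    (hc356 : c₃ + c₅ + c₆ ≠ 0)
    (lam : F) (hlam : lam = (c₃ + c₅ + c₆) / (c₁ + c₂)) (hlam1 : 1 < ‖lam‖)
    (f : V → X) (hf0 : f 0 = 0)
    (ψ : V → V → ℝ) (hψ : ∀ x y, 0 ≤ ψ x y)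
    (hfψ : ∀ x y : V,
      ‖c₁ • f (a • x + b • y) + c₂ • f (a • x - b • y) - c₃ • f x - c₄ • f y
        - c₅ • f (x + y) - c₆ • f (x - y)‖ ≤ ψ x y) :
    (∀ x : V, ‖lam⁻¹ • f (a • x) - f x‖ ≤ ψ x 0 / ‖c₃ + c₅ + c₆‖) ∧
    (∀ L : ℝ, 0 < L → L < 1 → (∀ x : V, ψ (a • x) 0 ≤ L * ‖lam‖ * ψ x 0) →
      (∀ x : V, CauchySeq (fun n : ℕ => (lam ^ n)⁻¹ • f (a ^ n • x))) ∧
      ∃ T : V → X,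
        (∀ x : V, Tendsto (fun n : ℕ => (lam ^ n)⁻¹ • f (a ^ n • x)) atTop (𝓝 (T x))) ∧
        ∀ x : V, T (a • x) = lam • T x) := by
  have hlam0 : lam ≠ 0 := by
    intro h; rw [h, norm_zero] at hlam1; linarith
  have hnormpos : (0:ℝ) < ‖lam‖ := by linarith
  have hCnorm : (0:ℝ) < ‖c₃ + c₅ + c₆‖ := norm_pos_iff.mpr hc356
  have hkey : ∀ x : V, ‖lam⁻¹ • f (a • x) - f x‖ ≤ ψ x 0 / ‖c₃ + c₅ + c₆‖ := by
    intro x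
    have h := hfψ x 0
    simp only [smul_zero, add_zero, sub_zero, hf0] at h
    have heq : lam⁻¹ • f (a • x) - f x
        = (c₃ + c₅ + c₆)⁻¹ • (c₁ • f (a • x) + c₂ • f (a • x)
            - c₃ • f x - c₅ • f x - c₆ • f x) := by
      rw [hlam]
      match_scalars
      · field_simp
      · field_simp; ring
    rw [heq, norm_smul, norm_inv]
    rw [inv_mul_eq_div, div_le_div_iff₀ hCnorm hCnorm]
    calc ‖c₁ • f (a • x) + c₂ • f (a • x) - c₃ • f x - c₅ • f x - c₆ • f x‖ * ‖c₃ + c₅ + c₆‖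
        ≤ ψ x 0 * ‖c₃ + c₅ + c₆‖ := by
          apply mul_le_mul_of_nonneg_right h (norm_nonneg _)
      _ = ψ x 0 * ‖c₃ + c₅ + c₆‖ := rfl
  refine ⟨hkey, ?_⟩
  intro L hL0 hL1 hψL
  -- iterated psi bound
  have hiter : ∀ (n : ℕ) (x : V), ψ (a ^ n • x) 0 ≤ (L * ‖lam‖) ^ n * ψ x 0 := by
    intro n x
    induction n with
    | zero => simp
    | succ n ih =>
        have h1 : ψ (a ^ (n+1) • x) 0 ≤ L * ‖lam‖ * ψ (a ^ n • x) 0 := by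
          have := hψL (a ^ n • x)
          rw [pow_succ', mul_smul]
          exact this
        calc ψ (a ^ (n+1) • x) 0 ≤ L * ‖lam‖ * ψ (a ^ n • x) 0 := h1
          _ ≤ L * ‖lam‖ * ((L * ‖lam‖) ^ n * ψ x 0) := by
              apply mul_le_mul_of_nonneg_left ih
              positivity
          _ = (L * ‖lam‖) ^ (n+1) * ψ x 0 := by ring
  -- difference bound
  have hstep : ∀ (n : ℕ) (x : V),
      ‖(lam ^ (n+1))⁻¹ • f (a ^ (n+1) • x) - (lam ^ n)⁻¹ • f (a ^ n • x)‖
        ≤ (ψ x 0 / ‖c₃ + c₅ + c₆‖) * L ^ n := by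
    intro n x
    have heq : (lam ^ (n+1))⁻¹ • f (a ^ (n+1) • x) - (lam ^ n)⁻¹ • f (a ^ n • x)
        = (lam ^ n)⁻¹ • (lam⁻¹ • f (a • (a ^ n • x)) - f (a ^ n • x)) := by
      rw [smul_sub, smul_smul, ← mul_inv, ← pow_succ, smul_smul, ← pow_succ']
    rw [heq, norm_smul, norm_inv, norm_pow]
    calc (‖lam‖ ^ n)⁻¹ * ‖lam⁻¹ • f (a • (a ^ n • x)) - f (a ^ n • x)‖
        ≤ (‖lam‖ ^ n)⁻¹ * (ψ (a ^ n • x) 0 / ‖c₃ + c₅ + c₆‖) := by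
          apply mul_le_mul_of_nonneg_left (hkey _)
          positivity
      _ ≤ (‖lam‖ ^ n)⁻¹ * ((L * ‖lam‖) ^ n * ψ x 0 / ‖c₃ + c₅ + c₆‖) := by
          apply mul_le_mul_of_nonneg_left _ (by positivity)
          exact div_le_div_of_nonneg_right (hiter n x) hCnorm.le
      _ = (ψ x 0 / ‖c₃ + c₅ + c₆‖) * L ^ n := by
          rw [mul_pow]
          field_simp
  have hcauchy : ∀ x : V, CauchySeq (fun n : ℕ => (lam ^ n)⁻¹ • f (a ^ n • x)) := by
    intro x
    apply cauchySeq_of_le_geometric L (ψ x 0 / ‖c₃ + c₅ + c₆‖) hL1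
    intro n
    rw [dist_eq_norm, norm_sub_rev]
    exact hstep n x
  refine ⟨hcauchy, ?_⟩
  have hT : ∀ x : V, ∃ l : X,
      Tendsto (fun n : ℕ => (lam ^ n)⁻¹ • f (a ^ n • x)) atTop (𝓝 l) :=
    fun x => cauchySeq_tendsto_of_complete (hcauchy x)
  choose T hTt using hT
  refine ⟨T, hTt, ?_⟩
  intro x
  have h1 : Tendsto (fun n : ℕ => (lam ^ n)⁻¹ • f (a ^ n • (a • x))) atTop (𝓝 (T (a • x))) :=
    hTt (a • x)
  have h2 : Tendsto (fun n : ℕ => (lam ^ n)⁻¹ • f (a ^ n • (a • x))) atTop (𝓝 (lam • T x)) := by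
    have hshift : Tendsto (fun n : ℕ => (lam ^ (n+1))⁻¹ • f (a ^ (n+1) • x)) atTop (𝓝 (T x)) :=
      (hTt x).comp (tendsto_add_atTop_nat 1)
    have := hshift.const_smul lam
    convert this using 2 with n
    have harg : a ^ n • (a • x) = a ^ (n+1) • x := by rw [smul_smul, ← pow_succ]
    rw [harg, smul_smul]
    congr 1
    field_simp
    ring
  exact tendsto_nhds_unique h1 h2
end

section
/- Every solution f: V → B (V, B vector spaces over ℚ) of the cubic functional equation f(2x+y) + f(2x-y) = 12f(x) + 2f(x+y) + 2f(x-y) with f(0)=0 satisfies f(2x) = 8f(x) for all x ∈ V, and is a monomial function of degree 3, i.e., the diagonal of a symmetric 3-additive function. -/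
set_option maxHeartbeats 4000000 in
theorem stmt_15 {V B : Type*} [AddCommGroup V] [Module ℚ V] [AddCommGroup B] [Module ℚ B]
    (f : V → B) (hf0 : f 0 = 0)
    (hf : ∀ x y : V, f ((2 : ℚ) • x + y) + f ((2 : ℚ) • x - y) =
      (12 : ℚ) • f x + (2 : ℚ) • f (x + y) + (2 : ℚ) • f (x - y)) :
    (∀ x : V, f ((2 : ℚ) • x) = (8 : ℚ) • f x) ∧
    ∃ A : (Fin 3 → V) → B, MultiAdditive A ∧ SymmetricFn A ∧
      ∀ x : V, f x = A (fun _ => x) := by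
  have hodd : ∀ x : V, f (-x) = -f x := by
    intro x
    have h := hf 0 x
    simp only [smul_zero, zero_add, zero_sub, hf0] at h
    linear_combination (norm := module) (-1 : ℚ) • h
  have hdbl : ∀ x : V, f ((2:ℚ) • x) = (8:ℚ) • f x := by
    intro x
    have h := hf x 0
    simp only [add_zero, sub_zero] at h
    linear_combination (norm := module) (2:ℚ)⁻¹ • h
  have key2 : ∀ x y : V, f ((2:ℚ)•x + y)
      = (6:ℚ)•f x - (3:ℚ)•f y + (3:ℚ)•f (x+y) - f (x-y) := by
    intro x y
    have h1 := hf x y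
    have h2 := hf y ((2:ℚ)•x)
    rw [show (2:ℚ)•y + (2:ℚ)•x = (2:ℚ)•(x+y) by module,
        show (2:ℚ)•y - (2:ℚ)•x = -((2:ℚ)•(x-y)) by module,
        show y + (2:ℚ)•x = (2:ℚ)•x + y by module,
        show y - (2:ℚ)•x = -((2:ℚ)•x - y) by module] at h2
    simp only [hodd, hdbl] at h2
    linear_combination (norm := module) ((1:ℚ)/2) • h1 + (-(1:ℚ)/4) • h2
  have key4 : ∀ a b c d : V,
      f (a + b + c + d) + f (a + b) + f (a + c) + f (a + d) + f (b + c) + f (b + d) + f (c + d)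
      = f (a + b + c) + f (a + b + d) + f (a + c + d) + f (b + c + d) + f a + f b + f c + f d := by
    intro a b c d
    have h0 := key2 (d) (-a)
    rw [show (2:ℚ)•(d) + (-a) = -(a - (2:ℚ)•d) by module, show (d) + (-a) = -(a - d) by module, show (d) - (-a) = a + d by module] at h0
    simp only [hodd] at h0
    have h1 := key2 (d) (-a + c)
    rw [show (2:ℚ)•(d) + (-a + c) = -(a - c - (2:ℚ)•d) by module, show (d) + (-a + c) = -(a - c - d) by module, show (d) - (-a + c) = a - c + d by module, show -a + c = -(a - c) by module] at h1
    simp only [hodd] at h1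
    have h2 := key2 (d) (-a + c + d)
    rw [show (2:ℚ)•(d) + (-a + c + d) = -(a - c - (3:ℚ)•d) by module, show (d) + (-a + c + d) = -(a - c - (2:ℚ)•d) by module, show (d) - (-a + c + d) = a - c by module, show -a + c + d = -(a - c - d) by module] at h2
    simp only [hodd] at h2
    have h3 := key2 (d) (-a + b - c)
    rw [show (2:ℚ)•(d) + (-a + b - c) = -(a - b + c - (2:ℚ)•d) by module, show (d) + (-a + b - c) = -(a - b + c - d) by module, show (d) - (-a + b - c) = a - b + c + d by module, show -a + b - c = -(a - b + c) by module] at h3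
    simp only [hodd] at h3
    have h4 := key2 (d) (-a + b + c)
    rw [show (2:ℚ)•(d) + (-a + b + c) = -(a - b - c - (2:ℚ)•d) by module, show (d) + (-a + b + c) = -(a - b - c - d) by module, show (d) - (-a + b + c) = a - b - c + d by module, show -a + b + c = -(a - b - c) by module] at h4
    simp only [hodd] at h4
    have h5 := key2 (d) (-a + b + c + d)
    rw [show (2:ℚ)•(d) + (-a + b + c + d) = -(a - b - c - (3:ℚ)•d) by module, show (d) + (-a + b + c + d) = -(a - b - c - (2:ℚ)•d) by module, show (d) - (-a + b + c + d) = a - b - c by module, show -a + b + c + d = -(a - b - c - d) by module] at h5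
    simp only [hodd] at h5
    have h6 := key2 (c) (-a - c - d)
    rw [show (2:ℚ)•(c) + (-a - c - d) = -(a - c + d) by module, show (c) + (-a - c - d) = -(a + d) by module, show (c) - (-a - c - d) = a + (2:ℚ)•c + d by module, show -a - c - d = -(a + c + d) by module] at h6
    simp only [hodd] at h6
    have h7 := key2 (c) (-a - c)
    rw [show (2:ℚ)•(c) + (-a - c) = -(a - c) by module, show (c) + (-a - c) = -(a) by module, show (c) - (-a - c) = a + (2:ℚ)•c by module, show -a - c = -(a + c) by module] at h7
    simp only [hodd] at h7
    have h8 := key2 (c) (-a + b - c)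
    rw [show (2:ℚ)•(c) + (-a + b - c) = -(a - b - c) by module, show (c) + (-a + b - c) = -(a - b) by module, show (c) - (-a + b - c) = a - b + (2:ℚ)•c by module, show -a + b - c = -(a - b + c) by module] at h8
    simp only [hodd] at h8
    have h9 := key2 (c) (-a + b - d)
    rw [show (2:ℚ)•(c) + (-a + b - d) = -(a - b - (2:ℚ)•c + d) by module, show (c) + (-a + b - d) = -(a - b - c + d) by module, show (c) - (-a + b - d) = a - b + c + d by module, show -a + b - d = -(a - b + d) by module] at h9
    simp only [hodd] at h9
    have h10 := key2 (c) (-a + b)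
    rw [show (2:ℚ)•(c) + (-a + b) = -(a - b - (2:ℚ)•c) by module, show (c) + (-a + b) = -(a - b - c) by module, show (c) - (-a + b) = a - b + c by module, show -a + b = -(a - b) by module] at h10
    simp only [hodd] at h10
    have h11 := key2 (c + d) (-a - c)
    rw [show (2:ℚ)•(c + d) + (-a - c) = -(a - c - (2:ℚ)•d) by module, show (c + d) + (-a - c) = -(a - d) by module, show (c + d) - (-a - c) = a + (2:ℚ)•c + d by module, show -a - c = -(a + c) by module] at h11
    simp only [hodd] at h11
    have h12 := key2 (c + d) (-a - c + d)
    rw [show (2:ℚ)•(c + d) + (-a - c + d) = -(a - c - (3:ℚ)•d) by module, show (c + d) + (-a - c + d) = -(a - (2:ℚ)•d) by module, show (c + d) - (-a - c + d) = a + (2:ℚ)•c by module, show -a - c + d = -(a + c - d) by module] at h12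
    simp only [hodd] at h12
    have h13 := key2 (c + d) (-a + b - c + d)
    rw [show (2:ℚ)•(c + d) + (-a + b - c + d) = -(a - b - c - (3:ℚ)•d) by module, show (c + d) + (-a + b - c + d) = -(a - b - (2:ℚ)•d) by module, show (c + d) - (-a + b - c + d) = a - b + (2:ℚ)•c by module, show -a + b - c + d = -(a - b + c - d) by module] at h13
    simp only [hodd] at h13
    have h14 := key2 (b) (-a - b - c - d)
    rw [show (2:ℚ)•(b) + (-a - b - c - d) = -(a - b + c + d) by module, show (b) + (-a - b - c - d) = -(a + c + d) by module, show (b) - (-a - b - c - d) = a + (2:ℚ)•b + c + d by module, show -a - b - c - d = -(a + b + c + d) by module] at h14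
    simp only [hodd] at h14
    have h15 := key2 (b) (-a - b - c)
    rw [show (2:ℚ)•(b) + (-a - b - c) = -(a - b + c) by module, show (b) + (-a - b - c) = -(a + c) by module, show (b) - (-a - b - c) = a + (2:ℚ)•b + c by module, show -a - b - c = -(a + b + c) by module] at h15
    simp only [hodd] at h15
    have h16 := key2 (b) (-a - b - d)
    rw [show (2:ℚ)•(b) + (-a - b - d) = -(a - b + d) by module, show (b) + (-a - b - d) = -(a + d) by module, show (b) - (-a - b - d) = a + (2:ℚ)•b + d by module, show -a - b - d = -(a + b + d) by module] at h16
    simp only [hodd] at h16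
    have h17 := key2 (b + d) (-a - b - c)
    rw [show (2:ℚ)•(b + d) + (-a - b - c) = -(a - b + c - (2:ℚ)•d) by module, show (b + d) + (-a - b - c) = -(a + c - d) by module, show (b + d) - (-a - b - c) = a + (2:ℚ)•b + c + d by module, show -a - b - c = -(a + b + c) by module] at h17
    simp only [hodd] at h17
    have h18 := key2 (b + d) (-a - b)
    rw [show (2:ℚ)•(b + d) + (-a - b) = -(a - b - (2:ℚ)•d) by module, show (b + d) + (-a - b) = -(a - d) by module, show (b + d) - (-a - b) = a + (2:ℚ)•b + d by module, show -a - b = -(a + b) by module] at h18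
    simp only [hodd] at h18
    have h19 := key2 (b + c) (-a - b - c - d)
    rw [show (2:ℚ)•(b + c) + (-a - b - c - d) = -(a - b - c + d) by module, show (b + c) + (-a - b - c - d) = -(a + d) by module, show (b + c) - (-a - b - c - d) = a + (2:ℚ)•b + (2:ℚ)•c + d by module, show -a - b - c - d = -(a + b + c + d) by module] at h19
    simp only [hodd] at h19
    have h20 := key2 (b + c) (-a - b - d)
    rw [show (2:ℚ)•(b + c) + (-a - b - d) = -(a - b - (2:ℚ)•c + d) by module, show (b + c) + (-a - b - d) = -(a - c + d) by module, show (b + c) - (-a - b - d) = a + (2:ℚ)•b + c + d by module, show -a - b - d = -(a + b + d) by module] at h20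
    simp only [hodd] at h20
    have h21 := key2 (b + c) (-a - b)
    rw [show (2:ℚ)•(b + c) + (-a - b) = -(a - b - (2:ℚ)•c) by module, show (b + c) + (-a - b) = -(a - c) by module, show (b + c) - (-a - b) = a + (2:ℚ)•b + c by module, show -a - b = -(a + b) by module] at h21
    simp only [hodd] at h21
    have h22 := key2 (b + c + d) (-a - b - c)
    rw [show (2:ℚ)•(b + c + d) + (-a - b - c) = -(a - b - c - (2:ℚ)•d) by module, show (b + c + d) + (-a - b - c) = -(a - d) by module, show (b + c + d) - (-a - b - c) = a + (2:ℚ)•b + (2:ℚ)•c + d by module, show -a - b - c = -(a + b + c) by module] at h22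
    simp only [hodd] at h22
    linear_combination (norm := module) (1/4 : ℚ) • h0 + (-1/12 : ℚ) • h1 + (-1/12 : ℚ) • h2 + (-1/12 : ℚ) • h3 + (1/12 : ℚ) • h4 + (1/12 : ℚ) • h5 + (1/6 : ℚ) • h6 + (-1/12 : ℚ) • h7 + (1/12 : ℚ) • h8 + (-1/12 : ℚ) • h9 + (1/12 : ℚ) • h10 + (-1/6 : ℚ) • h11 + (1/12 : ℚ) • h12 + (-1/12 : ℚ) • h13 + (-1/6 : ℚ) • h14 + (1/12 : ℚ) • h15 + (1/4 : ℚ) • h16 + (1/12 : ℚ) • h17 + (-1/4 : ℚ) • h18 + (-1/6 : ℚ) • h19 + (1/12 : ℚ) • h20 + (-1/12 : ℚ) • h21 + (1/6 : ℚ) • h22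

  refine ⟨hdbl, ⟨fun v => (6:ℚ)⁻¹ • (f (∑ j, v j) - ∑ j, f ((∑ k, v k) - v j) + ∑ j, f (v j)),
    ?_, ?_, ?_⟩⟩
  · -- MultiAdditive
    intro i v x y
    fin_cases i <;>
      simp only [Fin.sum_univ_three, Fin.isValue, Function.update_apply, Fin.zero_eta,
        Fin.mk_one, Fin.reduceFinMk, Fin.reduceEq, reduceIte, if_true]
    · rw [show x + y + v 1 + v 2 - (x + y) = v 1 + v 2 by module,
          show x + y + v 1 + v 2 - v 1 = x + y + v 2 by module,
          show x + y + v 1 + v 2 - v 2 = x + y + v 1 by module,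
          show x + v 1 + v 2 - x = v 1 + v 2 by module,
          show x + v 1 + v 2 - v 1 = x + v 2 by module,
          show x + v 1 + v 2 - v 2 = x + v 1 by module,
          show y + v 1 + v 2 - y = v 1 + v 2 by module,
          show y + v 1 + v 2 - v 1 = y + v 2 by module,
          show y + v 1 + v 2 - v 2 = y + v 1 by module]
      linear_combination (norm := module) (6:ℚ)⁻¹ • key4 x y (v 1) (v 2)
    · rw [show v 0 + (x + y) + v 2 - v 0 = x + y + v 2 by module,
          show v 0 + (x + y) + v 2 - (x + y) = v 0 + v 2 by module,
          show v 0 + (x + y) + v 2 - v 2 = x + y + v 0 by module,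
          show v 0 + (x + y) + v 2 = x + y + v 0 + v 2 by module,
          show v 0 + x + v 2 - v 0 = x + v 2 by module,
          show v 0 + x + v 2 - x = v 0 + v 2 by module,
          show v 0 + x + v 2 - v 2 = x + v 0 by module,
          show v 0 + x + v 2 = x + v 0 + v 2 by module,
          show v 0 + y + v 2 - v 0 = y + v 2 by module,
          show v 0 + y + v 2 - y = v 0 + v 2 by module,
          show v 0 + y + v 2 - v 2 = y + v 0 by module,
          show v 0 + y + v 2 = y + v 0 + v 2 by module]
      linear_combination (norm := module) (6:ℚ)⁻¹ • key4 x y (v 0) (v 2)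
    · rw [show v 0 + v 1 + (x + y) - v 0 = x + y + v 1 by module,
          show v 0 + v 1 + (x + y) - v 1 = x + y + v 0 by module,
          show v 0 + v 1 + (x + y) - (x + y) = v 0 + v 1 by module,
          show v 0 + v 1 + (x + y) = x + y + v 0 + v 1 by module,
          show v 0 + v 1 + x - v 0 = x + v 1 by module,
          show v 0 + v 1 + x - v 1 = x + v 0 by module,
          show v 0 + v 1 + x - x = v 0 + v 1 by module,
          show v 0 + v 1 + x = x + v 0 + v 1 by module,
          show v 0 + v 1 + y - v 0 = y + v 1 by module,
          show v 0 + v 1 + y - v 1 = y + v 0 by module,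
          show v 0 + v 1 + y - y = v 0 + v 1 by module,
          show v 0 + v 1 + y = y + v 0 + v 1 by module]
      linear_combination (norm := module) (6:ℚ)⁻¹ • key4 x y (v 0) (v 1)
  · -- SymmetricFn
    intro σ v
    show (6:ℚ)⁻¹ • (f (∑ j, v (σ j)) - ∑ j, f ((∑ k, v (σ k)) - v (σ j)) + ∑ j, f (v (σ j)))
       = (6:ℚ)⁻¹ • (f (∑ j, v j) - ∑ j, f ((∑ k, v k) - v j) + ∑ j, f (v j))
    have h1 : ∑ j, v (σ j) = ∑ j, v j := Fintype.sum_equiv σ _ _ (fun i => rfl)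
    rw [h1]
    have h2 : ∑ j, f ((∑ k, v k) - v (σ j)) = ∑ j, f ((∑ k, v k) - v j) :=
      Fintype.sum_equiv σ _ _ (fun i => rfl)
    have h3 : ∑ j, f (v (σ j)) = ∑ j, f (v j) := Fintype.sum_equiv σ _ _ (fun i => rfl)
    rw [h2, h3]
  · -- diagonal
    intro x
    have hxx : f (x + x) = (8:ℚ) • f x := by
      have h := hdbl x
      rw [show (2:ℚ)•x = x + x by module] at h
      exact h
    have h3x : f (x + x + x) = (27:ℚ) • f x := by
      have h := key2 x x
      rw [show (2:ℚ)•x + x = x + x + x by module, sub_self, hf0, hxx] at h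
      linear_combination (norm := module) h
    show f x = (6:ℚ)⁻¹ • (f (∑ j : Fin 3, x) - ∑ j : Fin 3, f ((∑ k : Fin 3, x) - x) + ∑ j : Fin 3, f x)
    simp only [Fin.sum_univ_three]
    rw [show x + x + x - x = x + x by module, h3x, hxx]
    module
end

section
/- Every solution f: V → B (V, B vector spaces over ℚ) of the quartic functional equation f(2x+y) + f(2x-y) = 4f(x+y) + 4f(x-y) + 24f(x) - 6f(y) with f(0) = 0 satisfies f(2x) = 16 f(x) for all x, and is a monomial function of degree 4, i.e., the diagonal of a symmetric 4-additive function. -/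
set_option maxHeartbeats 2000000 in
lemma keyE {V B : Type*} [AddCommGroup V] [Module ℚ V] [AddCommGroup B] [Module ℚ B]
    (f : V → B) (hf0 : f 0 = 0)
    (hf : ∀ x y : V, f ((2 : ℚ) • x + y) + f ((2 : ℚ) • x - y) =
      (4 : ℚ) • f (x + y) + (4 : ℚ) • f (x - y) + (24 : ℚ) • f x - (6 : ℚ) • f y)
    (x y z : V) :
    f (x + y + z) + f (x + y - z) + f (x - y + z) + f (x - y - z)
      + (4 : ℚ) • f x + (4 : ℚ) • f y + (4 : ℚ) • f z
    = (2 : ℚ) • f (x + y) + (2 : ℚ) • f (x - y) + (2 : ℚ) • f (x + z)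
      + (2 : ℚ) • f (x - z) + (2 : ℚ) • f (y + z) + (2 : ℚ) • f (y - z) := by
  have h0 := hf x x
  rw [show ((2 : ℚ) • x + x : V) = (3 : ℚ) • x from by module, show ((2 : ℚ) • x - x : V) = x from by module, show (x + x : V) = (2 : ℚ) • x from by module, show (x - x : V) = (0 : V) from by module] at h0
  have h1 := hf x z
  have h2 := hf x (x + y)
  rw [show ((2 : ℚ) • x + (x + y) : V) = (3 : ℚ) • x + y from by module, show ((2 : ℚ) • x - (x + y) : V) = x - y from by module, show (x + (x + y) : V) = (2 : ℚ) • x + y from by module, show (x - (x + y) : V) = -y from by module] at h2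
  have h3 := hf x (x - y)
  rw [show ((2 : ℚ) • x + (x - y) : V) = (3 : ℚ) • x - y from by module, show ((2 : ℚ) • x - (x - y) : V) = x + y from by module, show (x + (x - y) : V) = (2 : ℚ) • x - y from by module, show (x - (x - y) : V) = y from by module] at h3
  have h4 := hf x (x + z)
  rw [show ((2 : ℚ) • x + (x + z) : V) = (3 : ℚ) • x + z from by module, show ((2 : ℚ) • x - (x + z) : V) = x - z from by module, show (x + (x + z) : V) = (2 : ℚ) • x + z from by module, show (x - (x + z) : V) = -z from by module] at h4
  have h5 := hf x (x - z)
  rw [show ((2 : ℚ) • x + (x - z) : V) = (3 : ℚ) • x - z from by module, show ((2 : ℚ) • x - (x - z) : V) = x + z from by module, show (x + (x - z) : V) = (2 : ℚ) • x - z from by module, show (x - (x - z) : V) = z from by module] at h5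
  have h6 := hf x (y + z)
  rw [show ((2 : ℚ) • x + (y + z) : V) = (2 : ℚ) • x + y + z from by module, show ((2 : ℚ) • x - (y + z) : V) = (2 : ℚ) • x - y - z from by module, show (x + (y + z) : V) = x + y + z from by module, show (x - (y + z) : V) = x - y - z from by module] at h6
  have h7 := hf x (y - z)
  rw [show ((2 : ℚ) • x + (y - z) : V) = (2 : ℚ) • x + y - z from by module, show ((2 : ℚ) • x - (y - z) : V) = (2 : ℚ) • x - y + z from by module, show (x + (y - z) : V) = x + y - z from by module, show (x - (y - z) : V) = x - y + z from by module] at h7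
  have h8 := hf x (x + y + z)
  rw [show ((2 : ℚ) • x + (x + y + z) : V) = (3 : ℚ) • x + y + z from by module, show ((2 : ℚ) • x - (x + y + z) : V) = x - y - z from by module, show (x + (x + y + z) : V) = (2 : ℚ) • x + y + z from by module, show (x - (x + y + z) : V) = -y - z from by module] at h8
  have h9 := hf x (x - y + z)
  rw [show ((2 : ℚ) • x + (x - y + z) : V) = (3 : ℚ) • x - y + z from by module, show ((2 : ℚ) • x - (x - y + z) : V) = x + y - z from by module, show (x + (x - y + z) : V) = (2 : ℚ) • x - y + z from by module, show (x - (x - y + z) : V) = y - z from by module] at h9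
  have h10 := hf x (x - y - z)
  rw [show ((2 : ℚ) • x + (x - y - z) : V) = (3 : ℚ) • x - y - z from by module, show ((2 : ℚ) • x - (x - y - z) : V) = x + y + z from by module, show (x + (x - y - z) : V) = (2 : ℚ) • x - y - z from by module, show (x - (x - y - z) : V) = y + z from by module] at h10
  have h11 := hf x (-x)
  rw [show ((2 : ℚ) • x + (-x) : V) = x from by module, show ((2 : ℚ) • x - (-x) : V) = (3 : ℚ) • x from by module, show (x + (-x) : V) = (0 : V) from by module, show (x - (-x) : V) = (2 : ℚ) • x from by module] at h11
  have h12 := hf x (-z)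
  rw [show ((2 : ℚ) • x + (-z) : V) = (2 : ℚ) • x - z from by module, show ((2 : ℚ) • x - (-z) : V) = (2 : ℚ) • x + z from by module, show (x + (-z) : V) = x - z from by module, show (x - (-z) : V) = x + z from by module] at h12
  have h13 := hf x (-x + y)
  rw [show ((2 : ℚ) • x + (-x + y) : V) = x + y from by module, show ((2 : ℚ) • x - (-x + y) : V) = (3 : ℚ) • x - y from by module, show (x + (-x + y) : V) = y from by module, show (x - (-x + y) : V) = (2 : ℚ) • x - y from by module] at h13
  have h14 := hf x (-x - z)
  rw [show ((2 : ℚ) • x + (-x - z) : V) = x - z from by module, show ((2 : ℚ) • x - (-x - z) : V) = (3 : ℚ) • x + z from by module, show (x + (-x - z) : V) = -z from by module, show (x - (-x - z) : V) = (2 : ℚ) • x + z from by module] at h14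
  have h15 := hf x (-x + z)
  rw [show ((2 : ℚ) • x + (-x + z) : V) = x + z from by module, show ((2 : ℚ) • x - (-x + z) : V) = (3 : ℚ) • x - z from by module, show (x + (-x + z) : V) = z from by module, show (x - (-x + z) : V) = (2 : ℚ) • x - z from by module] at h15
  have h16 := hf x (-y - z)
  rw [show ((2 : ℚ) • x + (-y - z) : V) = (2 : ℚ) • x - y - z from by module, show ((2 : ℚ) • x - (-y - z) : V) = (2 : ℚ) • x + y + z from by module, show (x + (-y - z) : V) = x - y - z from by module, show (x - (-y - z) : V) = x + y + z from by module] at h16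
  have h17 := hf x (-y + z)
  rw [show ((2 : ℚ) • x + (-y + z) : V) = (2 : ℚ) • x - y + z from by module, show ((2 : ℚ) • x - (-y + z) : V) = (2 : ℚ) • x + y - z from by module, show (x + (-y + z) : V) = x - y + z from by module, show (x - (-y + z) : V) = x + y - z from by module] at h17
  have h18 := hf x (-x + y - z)
  rw [show ((2 : ℚ) • x + (-x + y - z) : V) = x + y - z from by module, show ((2 : ℚ) • x - (-x + y - z) : V) = (3 : ℚ) • x - y + z from by module, show (x + (-x + y - z) : V) = y - z from by module, show (x - (-x + y - z) : V) = (2 : ℚ) • x - y + z from by module] at h18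
  have h19 := hf x (-x + y + z)
  rw [show ((2 : ℚ) • x + (-x + y + z) : V) = x + y + z from by module, show ((2 : ℚ) • x - (-x + y + z) : V) = (3 : ℚ) • x - y - z from by module, show (x + (-x + y + z) : V) = y + z from by module, show (x - (-x + y + z) : V) = (2 : ℚ) • x - y - z from by module] at h19
  have h20 := hf y (x + y)
  rw [show ((2 : ℚ) • y + (x + y) : V) = x + (3 : ℚ) • y from by module, show ((2 : ℚ) • y - (x + y) : V) = -x + y from by module, show (y + (x + y) : V) = x + (2 : ℚ) • y from by module, show (y - (x + y) : V) = -x from by module] at h20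
  have h21 := hf y (y + z)
  rw [show ((2 : ℚ) • y + (y + z) : V) = (3 : ℚ) • y + z from by module, show ((2 : ℚ) • y - (y + z) : V) = y - z from by module, show (y + (y + z) : V) = (2 : ℚ) • y + z from by module, show (y - (y + z) : V) = -z from by module] at h21
  have h22 := hf y (x + y + z)
  rw [show ((2 : ℚ) • y + (x + y + z) : V) = x + (3 : ℚ) • y + z from by module, show ((2 : ℚ) • y - (x + y + z) : V) = -x + y - z from by module, show (y + (x + y + z) : V) = x + (2 : ℚ) • y + z from by module, show (y - (x + y + z) : V) = -x - z from by module] at h22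
  have h23 := hf z x
  rw [show ((2 : ℚ) • z + x : V) = x + (2 : ℚ) • z from by module, show ((2 : ℚ) • z - x : V) = -x + (2 : ℚ) • z from by module, show (z + x : V) = x + z from by module, show (z - x : V) = -x + z from by module] at h23
  have h24 := hf z y
  rw [show ((2 : ℚ) • z + y : V) = y + (2 : ℚ) • z from by module, show ((2 : ℚ) • z - y : V) = -y + (2 : ℚ) • z from by module, show (z + y : V) = y + z from by module, show (z - y : V) = -y + z from by module] at h24
  have h25 := hf z (x - y)
  rw [show ((2 : ℚ) • z + (x - y) : V) = x - y + (2 : ℚ) • z from by module, show ((2 : ℚ) • z - (x - y) : V) = -x + y + (2 : ℚ) • z from by module, show (z + (x - y) : V) = x - y + z from by module, show (z - (x - y) : V) = -x + y + z from by module] at h25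
  have h26 := hf z (x + z)
  rw [show ((2 : ℚ) • z + (x + z) : V) = x + (3 : ℚ) • z from by module, show ((2 : ℚ) • z - (x + z) : V) = -x + z from by module, show (z + (x + z) : V) = x + (2 : ℚ) • z from by module, show (z - (x + z) : V) = -x from by module] at h26
  have h27 := hf z (y + z)
  rw [show ((2 : ℚ) • z + (y + z) : V) = y + (3 : ℚ) • z from by module, show ((2 : ℚ) • z - (y + z) : V) = -y + z from by module, show (z + (y + z) : V) = y + (2 : ℚ) • z from by module, show (z - (y + z) : V) = -y from by module] at h27
  have h28 := hf z (x - y + z)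
  rw [show ((2 : ℚ) • z + (x - y + z) : V) = x - y + (3 : ℚ) • z from by module, show ((2 : ℚ) • z - (x - y + z) : V) = -x + y + z from by module, show (z + (x - y + z) : V) = x - y + (2 : ℚ) • z from by module, show (z - (x - y + z) : V) = -x + y from by module] at h28
  have h29 := hf z (x - y - z)
  rw [show ((2 : ℚ) • z + (x - y - z) : V) = x - y + z from by module, show ((2 : ℚ) • z - (x - y - z) : V) = -x + y + (3 : ℚ) • z from by module, show (z + (x - y - z) : V) = x - y from by module, show (z - (x - y - z) : V) = -x + y + (2 : ℚ) • z from by module] at h29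
  have h30 := hf z ((0 : V))
  rw [show ((2 : ℚ) • z + ((0 : V)) : V) = (2 : ℚ) • z from by module, show ((2 : ℚ) • z - ((0 : V)) : V) = (2 : ℚ) • z from by module, show (z + ((0 : V)) : V) = z from by module, show (z - ((0 : V)) : V) = z from by module] at h30
  have h31 := hf (x + y) (x - y)
  rw [show ((2 : ℚ) • (x + y) + (x - y) : V) = (3 : ℚ) • x + y from by module, show ((2 : ℚ) • (x + y) - (x - y) : V) = x + (3 : ℚ) • y from by module, show ((x + y) + (x - y) : V) = (2 : ℚ) • x from by module, show ((x + y) - (x - y) : V) = (2 : ℚ) • y from by module] at h31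
  have h32 := hf (x + z) (x + y)
  rw [show ((2 : ℚ) • (x + z) + (x + y) : V) = (3 : ℚ) • x + y + (2 : ℚ) • z from by module, show ((2 : ℚ) • (x + z) - (x + y) : V) = x - y + (2 : ℚ) • z from by module, show ((x + z) + (x + y) : V) = (2 : ℚ) • x + y + z from by module, show ((x + z) - (x + y) : V) = -y + z from by module] at h32
  have h33 := hf (x + z) (x - z)
  rw [show ((2 : ℚ) • (x + z) + (x - z) : V) = (3 : ℚ) • x + z from by module, show ((2 : ℚ) • (x + z) - (x - z) : V) = x + (3 : ℚ) • z from by module, show ((x + z) + (x - z) : V) = (2 : ℚ) • x from by module, show ((x + z) - (x - z) : V) = (2 : ℚ) • z from by module] at h33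
  have h34 := hf (x + z) (x + y - z)
  rw [show ((2 : ℚ) • (x + z) + (x + y - z) : V) = (3 : ℚ) • x + y + z from by module, show ((2 : ℚ) • (x + z) - (x + y - z) : V) = x - y + (3 : ℚ) • z from by module, show ((x + z) + (x + y - z) : V) = (2 : ℚ) • x + y from by module, show ((x + z) - (x + y - z) : V) = -y + (2 : ℚ) • z from by module] at h34
  have h35 := hf (y + z) (x + y)
  rw [show ((2 : ℚ) • (y + z) + (x + y) : V) = x + (3 : ℚ) • y + (2 : ℚ) • z from by module, show ((2 : ℚ) • (y + z) - (x + y) : V) = -x + y + (2 : ℚ) • z from by module, show ((y + z) + (x + y) : V) = x + (2 : ℚ) • y + z from by module, show ((y + z) - (x + y) : V) = -x + z from by module] at h35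
  have h36 := hf (y + z) (y - z)
  rw [show ((2 : ℚ) • (y + z) + (y - z) : V) = (3 : ℚ) • y + z from by module, show ((2 : ℚ) • (y + z) - (y - z) : V) = y + (3 : ℚ) • z from by module, show ((y + z) + (y - z) : V) = (2 : ℚ) • y from by module, show ((y + z) - (y - z) : V) = (2 : ℚ) • z from by module] at h36
  have h37 := hf (y + z) (x + y - z)
  rw [show ((2 : ℚ) • (y + z) + (x + y - z) : V) = x + (3 : ℚ) • y + z from by module, show ((2 : ℚ) • (y + z) - (x + y - z) : V) = -x + y + (3 : ℚ) • z from by module, show ((y + z) + (x + y - z) : V) = x + (2 : ℚ) • y from by module, show ((y + z) - (x + y - z) : V) = -x + (2 : ℚ) • z from by module] at h37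
  have h38 := hf (x + y + z) (x - y)
  rw [show ((2 : ℚ) • (x + y + z) + (x - y) : V) = (3 : ℚ) • x + y + (2 : ℚ) • z from by module, show ((2 : ℚ) • (x + y + z) - (x - y) : V) = x + (3 : ℚ) • y + (2 : ℚ) • z from by module, show ((x + y + z) + (x - y) : V) = (2 : ℚ) • x + z from by module, show ((x + y + z) - (x - y) : V) = (2 : ℚ) • y + z from by module] at h38
  have h39 := hf ((0 : V)) x
  rw [show ((2 : ℚ) • ((0 : V)) + x : V) = x from by module, show ((2 : ℚ) • ((0 : V)) - x : V) = -x from by module, show (((0 : V)) + x : V) = x from by module, show (((0 : V)) - x : V) = -x from by module] at h39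
  linear_combination (norm := module) ((1 : ℚ)/24) • h0 + ((-1 : ℚ)/9) • h1 + ((-1 : ℚ)/12) • h2 + ((1 : ℚ)/24) • h3 + ((5 : ℚ)/36) • h4 + ((-19 : ℚ)/72) • h5 + ((1 : ℚ)/18) • h6 + ((-19 : ℚ)/72) • h7 + ((-1 : ℚ)/12) • h8 + ((-1 : ℚ)/72) • h9 + ((19 : ℚ)/72) • h10 + ((-1 : ℚ)/24) • h11 + ((1 : ℚ)/9) • h12 + ((-1 : ℚ)/24) • h13 + ((-1 : ℚ)/18) • h14 + ((19 : ℚ)/72) • h15 + ((-1 : ℚ)/18) • h16 + ((19 : ℚ)/72) • h17 + ((1 : ℚ)/72) • h18 + ((-19 : ℚ)/72) • h19 + ((-1 : ℚ)/12) • h20 + ((1 : ℚ)/12) • h21 + ((-1 : ℚ)/12) • h22 + ((1 : ℚ)/3) • h23 + ((1 : ℚ)/3) • h24 + ((-5 : ℚ)/12) • h25 + ((1 : ℚ)/12) • h26 + ((1 : ℚ)/12) • h27 + ((-1 : ℚ)/12) • h28 + ((-1 : ℚ)/12) • h29 + ((-1 : ℚ)/3) • h30 + ((1 : ℚ)/12)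 • h31 + ((1 : ℚ)/12) • h32 + ((-1 : ℚ)/12) • h33 + ((1 : ℚ)/12) • h34 + ((1 : ℚ)/12) • h35 + ((-1 : ℚ)/12) • h36 + ((1 : ℚ)/12) • h37 + ((-1 : ℚ)/12) • h38 + ((-1 : ℚ)/12) • h39


section Aux
variable {V B : Type*} [AddCommGroup V] [Module ℚ V] [AddCommGroup B] [Module ℚ B]

/-- Polarization of a "quadratic" map is additive. -/
lemma polar_add (q : V → B) (h0 : q 0 = 0)
    (hq : ∀ a b : V, q (a + b) + q (a - b) = (2 : ℚ) • q a + (2 : ℚ) • q b)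
    (u v w : V) :
    q (u + v + w) - q (u + v) - q w
      = (q (u + w) - q u - q w) + (q (v + w) - q v - q w) := by
  have h1 := hq ((2:ℚ)⁻¹ • (u + v) + w) ((2:ℚ)⁻¹ • (u - v))
  rw [show (2:ℚ)⁻¹ • (u + v) + w + (2:ℚ)⁻¹ • (u - v) = u + w from by module,
      show (2:ℚ)⁻¹ • (u + v) + w - (2:ℚ)⁻¹ • (u - v) = v + w from by module] at h1
  have h2 := hq ((2:ℚ)⁻¹ • (u + v)) ((2:ℚ)⁻¹ • (u - v))
  rw [show (2:ℚ)⁻¹ • (u + v) + (2:ℚ)⁻¹ • (u - v) = u from by module,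
      show (2:ℚ)⁻¹ • (u + v) - (2:ℚ)⁻¹ • (u - v) = v from by module] at h2
  have h3 := hq ((2:ℚ)⁻¹ • (u + v) + w) ((2:ℚ)⁻¹ • (u + v))
  rw [show (2:ℚ)⁻¹ • (u + v) + w + (2:ℚ)⁻¹ • (u + v) = u + v + w from by module,
      show (2:ℚ)⁻¹ • (u + v) + w - (2:ℚ)⁻¹ • (u + v) = w from by module] at h3
  have h4 := hq ((2:ℚ)⁻¹ • (u + v)) ((2:ℚ)⁻¹ • (u + v))
  rw [show (2:ℚ)⁻¹ • (u + v) + (2:ℚ)⁻¹ • (u + v) = u + v from by module,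
      show (2:ℚ)⁻¹ • (u + v) - (2:ℚ)⁻¹ • (u + v) = (0:V) from by module, h0] at h4
  linear_combination (norm := module) h3 - h4 - h1 + h2

/-- The quadratic-difference of `f`. -/
def Qf (f : V → B) (x y : V) : B := f (x + y) + f (x - y) - (2:ℚ) • f x - (2:ℚ) • f y

/-- First polarization. -/
def Tf (f : V → B) (x y z : V) : B := Qf f x (y + z) - Qf f x y - Qf f x z

/-- Second polarization. -/
def Sf (f : V → B) (x u y z : V) : B := Tf f (x + u) y z - Tf f x y z - Tf f u y z

variable (f : V → B) (hf0 : f 0 = 0)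
    (hf : ∀ x y : V, f ((2 : ℚ) • x + y) + f ((2 : ℚ) • x - y) =
      (4 : ℚ) • f (x + y) + (4 : ℚ) • f (x - y) + (24 : ℚ) • f x - (6 : ℚ) • f y)

include hf0 hf

lemma f_even (y : V) : f (-y) = f y := by
  have h := hf 0 y
  rw [show (2:ℚ) • (0:V) + y = y from by module,
      show (2:ℚ) • (0:V) - y = -y from by module,
      show (0:V) + y = y from by module,
      show (0:V) - y = -y from by module, hf0] at h
  linear_combination (norm := module) (-(3:ℚ)⁻¹) • h

lemma Qf_symm (x y : V) : Qf f x y = Qf f y x := by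
  unfold Qf
  rw [show y + x = x + y from add_comm y x,
      show y - x = -(x - y) from by module, f_even f hf0 hf (x - y)]
  module

lemma Qf_zero (x : V) : Qf f x 0 = 0 := by
  unfold Qf
  rw [add_zero, sub_zero, hf0]
  module

lemma Qf_quad (x a b : V) :
    Qf f x (a + b) + Qf f x (a - b) = (2:ℚ) • Qf f x a + (2:ℚ) • Qf f x b := by
  unfold Qf
  rw [show x + (a + b) = x + a + b from by module,
      show x - (a + b) = x - a - b from by module,
      show x + (a - b) = x + a - b from by module,
      show x - (a - b) = x - a + b from by module]
  linear_combination (norm := module) keyE f hf0 hf x a b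

lemma Qf_quad' (a b y : V) :
    Qf f (a + b) y + Qf f (a - b) y = (2:ℚ) • Qf f a y + (2:ℚ) • Qf f b y := by
  rw [Qf_symm f hf0 hf (a + b) y, Qf_symm f hf0 hf (a - b) y,
      Qf_symm f hf0 hf a y, Qf_symm f hf0 hf b y]
  exact Qf_quad f hf0 hf y a b

lemma Tf_add_y (x y₁ y₂ z : V) :
    Tf f x (y₁ + y₂) z = Tf f x y₁ z + Tf f x y₂ z := by
  simp only [Tf]
  exact polar_add (fun w => Qf f x w) (Qf_zero f hf0 hf x) (Qf_quad f hf0 hf x) y₁ y₂ z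

lemma Tf_swap (x y z : V) : Tf f x y z = Tf f x z y := by
  simp only [Tf]
  rw [add_comm y z]
  abel

lemma Tf_add_z (x y z₁ z₂ : V) :
    Tf f x y (z₁ + z₂) = Tf f x y z₁ + Tf f x y z₂ := by
  rw [Tf_swap f hf0 hf x y (z₁ + z₂), Tf_add_y f hf0 hf x z₁ z₂ y,
      Tf_swap f hf0 hf x y z₁, Tf_swap f hf0 hf x y z₂]

lemma Tf_zero_x (y z : V) : Tf f 0 y z = 0 := by
  simp only [Tf]
  rw [Qf_symm f hf0 hf 0 (y + z), Qf_symm f hf0 hf 0 y, Qf_symm f hf0 hf 0 z,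
      Qf_zero f hf0 hf (y + z), Qf_zero f hf0 hf y, Qf_zero f hf0 hf z]
  abel

lemma Tf_quad_x (a b y z : V) :
    Tf f (a + b) y z + Tf f (a - b) y z = (2:ℚ) • Tf f a y z + (2:ℚ) • Tf f b y z := by
  simp only [Tf]
  have h1 := Qf_quad' f hf0 hf a b (y + z)
  have h2 := Qf_quad' f hf0 hf a b y
  have h3 := Qf_quad' f hf0 hf a b z
  linear_combination (norm := module) h1 - h2 - h3

lemma Sf_add_0 (x₁ x₂ u y z : V) :
    Sf f (x₁ + x₂) u y z = Sf f x₁ u y z + Sf f x₂ u y z := by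
  simp only [Sf]
  exact polar_add (fun t => Tf f t y z) (Tf_zero_x f hf0 hf y z)
    (fun a b => Tf_quad_x f hf0 hf a b y z) x₁ x₂ u

lemma Sf_swap01 (x u y z : V) : Sf f x u y z = Sf f u x y z := by
  simp only [Sf]
  rw [add_comm x u]
  abel

lemma Sf_add_1 (x u₁ u₂ y z : V) :
    Sf f x (u₁ + u₂) y z = Sf f x u₁ y z + Sf f x u₂ y z := by
  rw [Sf_swap01 f hf0 hf x (u₁ + u₂) y z, Sf_add_0 f hf0 hf u₁ u₂ x y z,
      Sf_swap01 f hf0 hf u₁ x y z, Sf_swap01 f hf0 hf u₂ x y z]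

lemma Sf_add_2 (x u y₁ y₂ z : V) :
    Sf f x u (y₁ + y₂) z = Sf f x u y₁ z + Sf f x u y₂ z := by
  simp only [Sf]
  rw [Tf_add_y f hf0 hf (x + u) y₁ y₂ z, Tf_add_y f hf0 hf x y₁ y₂ z,
      Tf_add_y f hf0 hf u y₁ y₂ z]
  abel

lemma Sf_add_3 (x u y z₁ z₂ : V) :
    Sf f x u y (z₁ + z₂) = Sf f x u y z₁ + Sf f x u y z₂ := by
  simp only [Sf]
  rw [Tf_add_z f hf0 hf (x + u) y z₁ z₂, Tf_add_z f hf0 hf x y z₁ z₂,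
      Tf_add_z f hf0 hf u y z₁ z₂]
  abel

lemma f_double (w : V) : f (w + w) = (16:ℚ) • f w := by
  have h := hf w 0
  rw [show (2:ℚ) • w + 0 = w + w from by module,
      show (2:ℚ) • w - 0 = w + w from by module,
      add_zero, sub_zero, hf0] at h
  linear_combination (norm := module) ((2:ℚ)⁻¹) • h

lemma f_triple (x : V) : f (x + x + x) = (81:ℚ) • f x := by
  have h := hf x x
  rw [show (2:ℚ) • x + x = x + x + x from by module,
      show (2:ℚ) • x - x = x from by module,
      show x - x = (0:V) from by module, hf0, f_double f hf0 hf x] at h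
  linear_combination (norm := module) h

lemma f_quadruple (x : V) : f (x + x + x + x) = (256:ℚ) • f x := by
  have h := f_double f hf0 hf (x + x)
  rw [show x + x + (x + x) = x + x + x + x from by module,
      f_double f hf0 hf x] at h
  linear_combination (norm := module) h

lemma Sf_diag (x : V) : Sf f x x x x = (48:ℚ) • f x := by
  simp only [Sf, Tf, Qf]
  rw [show x + x + (x + x) = x + x + x + x from by module,
      show x + x - (x + x) = (0:V) from by module,
      show x + (x + x) = x + x + x from by module,
      show x - (x + x) = -x from by module,
      show x + x - x = x from by module,
      show x - x = (0:V) from by module,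
      hf0, f_even f hf0 hf x]
  linear_combination (norm := module) f_quadruple f hf0 hf x
    - (4:ℚ) • f_triple f hf0 hf x + (8:ℚ) • f_double f hf0 hf x

end Aux

lemma symmetrize {V B : Type*} [AddCommGroup V] [AddCommGroup B] [Module ℚ B] (A : (Fin 4 → V) → B)
    (hA : MultiAdditive A) :
    ∃ A' : (Fin 4 → V) → B, MultiAdditive A' ∧ SymmetricFn A' ∧
      ∀ x : V, A' (fun _ => x) = A (fun _ => x) := by
  refine ⟨fun v => (24:ℚ)⁻¹ • ∑ σ : Equiv.Perm (Fin 4), A (v ∘ σ), ?_, ?_, ?_⟩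
  · intro i v x y
    have key : ∀ (w : V) (σ : Equiv.Perm (Fin 4)),
        (Function.update v i w) ∘ σ = Function.update (v ∘ σ) (σ.symm i) w :=
      fun w σ => Function.update_comp_equiv v σ i w
    have step : ∀ σ : Equiv.Perm (Fin 4),
        A ((Function.update v i (x + y)) ∘ σ)
          = A ((Function.update v i x) ∘ σ) + A ((Function.update v i y) ∘ σ) := by
      intro σ
      rw [key, key, key]
      exact hA (σ.symm i) (v ∘ σ) x y
    simp only [step, Finset.sum_add_distrib, smul_add]
  · intro τ v
    show (24:ℚ)⁻¹ • ∑ σ : Equiv.Perm (Fin 4), A ((v ∘ τ) ∘ σ)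
        = (24:ℚ)⁻¹ • ∑ σ : Equiv.Perm (Fin 4), A (v ∘ σ)
    congr 1
    exact Fintype.sum_equiv (Equiv.mulLeft τ) _ _ (fun σ => rfl)
  · intro x
    have hconst : ∀ σ : Equiv.Perm (Fin 4), ((fun _ : Fin 4 => x) ∘ σ) = fun _ : Fin 4 => x :=
      fun σ => rfl
    simp only [hconst, Finset.sum_const, Finset.card_univ, Fintype.card_perm, Fintype.card_fin]
    rw [show Nat.factorial 4 = 24 from rfl, ← Nat.cast_smul_eq_nsmul ℚ, smul_smul]
    norm_num


theorem stmt_16 {V B : Type*} [AddCommGroup V] [Module ℚ V] [AddCommGroup B] [Module ℚ B]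
    (f : V → B) (hf0 : f 0 = 0)
    (hf : ∀ x y : V, f ((2 : ℚ) • x + y) + f ((2 : ℚ) • x - y) =
      (4 : ℚ) • f (x + y) + (4 : ℚ) • f (x - y) + (24 : ℚ) • f x - (6 : ℚ) • f y) :
    (∀ x : V, f ((2 : ℚ) • x) = (16 : ℚ) • f x) ∧
    ∃ A : (Fin 4 → V) → B, MultiAdditive A ∧ SymmetricFn A ∧
      ∀ x : V, f x = A (fun _ => x) := by
  constructor
  · intro x
    rw [two_smul]
    exact f_double f hf0 hf x
  · have hA₀add : MultiAdditive
        (fun v : Fin 4 → V => (48:ℚ)⁻¹ • Sf f (v 0) (v 1) (v 2) (v 3)) := by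
      intro i v x y
      fin_cases i <;>
        simp (config := { decide := true }) [Function.update_apply, Fin.ext_iff] <;>
        first
          | rw [Sf_add_0 f hf0 hf x y (v 1) (v 2) (v 3), smul_add]
          | rw [Sf_add_1 f hf0 hf (v 0) x y (v 2) (v 3), smul_add]
          | rw [Sf_add_2 f hf0 hf (v 0) (v 1) x y (v 3), smul_add]
          | rw [Sf_add_3 f hf0 hf (v 0) (v 1) (v 2) x y, smul_add]
    have hdiag : ∀ x : V,
        f x = (fun v : Fin 4 → V => (48:ℚ)⁻¹ • Sf f (v 0) (v 1) (v 2) (v 3)) (fun _ => x) := by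
      intro x
      simp only
      rw [Sf_diag f hf0 hf x, smul_smul]
      norm_num
    obtain ⟨A, h1, h2, h3⟩ :=
      symmetrize (fun v : Fin 4 → V => (48:ℚ)⁻¹ • Sf f (v 0) (v 1) (v 2) (v 3)) hA₀add
    exact ⟨A, h1, h2, fun x => (hdiag x).trans (h3 x).symm⟩
end

section
/- Let f: V → B satisfy the general equation c_1 f(ax+by) + c_2 f(ax-by) = c_3 f(x) + c_4 f(y) + c_5 f(x+y) + c_6 f(x-y) for all x, y ∈ V. Then for all x, y, h_1, h_2 ∈ V: c_1 Δ_{(a-b)h_1} Δ_{(a+b)h_2} f(ax+by) + c_2 Δ_{(a+b)h_1} Δ_{(a-b)h_2} f(ax-by) = c_3 Δ_{h_1} Δ_{h_2} f(x) + c_4 Δ_{-h_1} Δ_{h_2} f(y). -/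
theorem stmt_17 {F V B : Type*} [Field F] [AddCommGroup V] [Module F V]
    [AddCommGroup B] [Module F B]
    (a b c₁ c₂ c₃ c₄ c₅ c₆ : F) (f : V → B)
    (hf : ∀ x y : V,
      c₁ • f (a • x + b • y) + c₂ • f (a • x - b • y) =
        c₃ • f x + c₄ • f y + c₅ • f (x + y) + c₆ • f (x - y)) :
    ∀ x y h₁ h₂ : V,
      c₁ • (fdiff ((a - b) • h₁) (fdiff ((a + b) • h₂) f)) (a • x + b • y) +
        c₂ • (fdiff ((a + b) • h₁) (fdiff ((a - b) • h₂) f)) (a • x - b • y) =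
      c₃ • (fdiff h₁ (fdiff h₂ f)) x + c₄ • (fdiff (-h₁) (fdiff h₂ f)) y := by
  intro x y h₁ h₂
  have h1 := hf (x + h₁ + h₂) (y - h₁ + h₂)
  have h2 := hf (x + h₁) (y - h₁)
  have h3 := hf (x + h₂) (y + h₂)
  have h4 := hf x y
  have e1 : a • (x + h₁ + h₂) + b • (y - h₁ + h₂)
      = a • x + b • y + (a - b) • h₁ + (a + b) • h₂ := by module
  have e2 : a • (x + h₁ + h₂) - b • (y - h₁ + h₂)
      = a • x - b • y + (a + b) • h₁ + (a - b) • h₂ := by module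
  have e3 : a • (x + h₁) + b • (y - h₁) = a • x + b • y + (a - b) • h₁ := by module
  have e4 : a • (x + h₁) - b • (y - h₁) = a • x - b • y + (a + b) • h₁ := by module
  have e5 : a • (x + h₂) + b • (y + h₂) = a • x + b • y + (a + b) • h₂ := by module
  have e6 : a • (x + h₂) - b • (y + h₂) = a • x - b • y + (a - b) • h₂ := by module
  have e7 : x + h₁ + h₂ + (y - h₁ + h₂) = x + y + h₂ + h₂ := by abel
  have e8 : x + h₁ + h₂ - (y - h₁ + h₂) = x - y + h₁ + h₁ := by abel
  have e9 : x + h₁ + (y - h₁) = x + y := by abel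
  have e10 : x + h₁ - (y - h₁) = x - y + h₁ + h₁ := by abel
  have e11 : x + h₂ + (y + h₂) = x + y + h₂ + h₂ := by abel
  have e12 : x + h₂ - (y + h₂) = x - y := by abel
  rw [e1, e2, e7, e8] at h1
  rw [e3, e4, e9, e10] at h2
  rw [e5, e6, e11, e12] at h3
  simp only [fdiff]
  simp only [sub_eq_add_neg] at h1 h2 h3 h4 ⊢
  linear_combination (norm := module) h1 - h2 - h3 + h4
end
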